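/- arXiv:1607.00565 — 3 statements merged into one kernel-verified Lean document; each statement's English description precedes it below -/
import Mathlib

section
/- Let n ≥ 3. In the positive braid monoid Br_n, the Charney graph — the directed graph whose vertex set is V = S \ {1, Δ_n} (the simple braids other than the unit and the Garside element) and with an edge from x to y if and only if x → y — is strongly connected and contains loops. Precisely: (a) every generator σ_i belongs to V and satisfies σ_i → σ_i; (b) for all x, y ∈ V there exist m ≥ 0 and vertices z_0 = x, z_1, …, z_m = y, all in V, with z_j → z_{j+1} for every 0 ≤ j < m. -/
open scoped Classical

namespace BraidMeasure

/-- Defining relations of the positive braid monoid on `n` strands,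
with Artin generators indexed by `Fin (n - 1)`. -/
inductive BraidRel (n : ℕ) :
    FreeMonoid (Fin (n - 1)) → FreeMonoid (Fin (n - 1)) → Prop
  | comm (i j : Fin (n - 1)) (h : (i : ℕ) + 2 ≤ (j : ℕ)) :
      BraidRel n (FreeMonoid.of i * FreeMonoid.of j)
        (FreeMonoid.of j * FreeMonoid.of i)
  | braid (i j : Fin (n - 1)) (h : (i : ℕ) + 1 = (j : ℕ)) :
      BraidRel n (FreeMonoid.of i * FreeMonoid.of j * FreeMonoid.of i)
        (FreeMonoid.of j * FreeMonoid.of i * FreeMonoid.of j)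

/-- The positive braid monoid `Br_n`, presented by the Artin relations. -/
def BraidMonoid (n : ℕ) : Type := (conGen (BraidRel n)).Quotient

instance (n : ℕ) : Monoid (BraidMonoid n) :=
  inferInstanceAs (Monoid (conGen (BraidRel n)).Quotient)

/-- The Artin generator `σ_{i+1}` of `Br_n`. -/
def gen {n : ℕ} (i : Fin (n - 1)) : BraidMonoid n :=
  (conGen (BraidRel n)).mk' (FreeMonoid.of i)

/-- Left divisibility: `x ≤_l y` iff `∃ z, y = x * z`. -/
def ldvd {n : ℕ} (x y : BraidMonoid n) : Prop := ∃ z, y = x * z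

/-- Right divisibility: `x ≤_r y` iff `∃ z, y = z * x`. -/
def rdvd {n : ℕ} (x y : BraidMonoid n) : Prop := ∃ z, y = z * x

/-- `σ_{i+1}` for a natural number index, with junk value `1` out of range. -/
def gen' {n : ℕ} (i : ℕ) : BraidMonoid n :=
  if h : i < n - 1 then gen ⟨i, h⟩ else 1

/-- The Garside element `Δ_n = (σ_1 ⋯ σ_{n-1})(σ_1 ⋯ σ_{n-2}) ⋯ (σ_1 σ_2) σ_1`. -/
def garside (n : ℕ) : BraidMonoid n :=
  ((List.range (n - 1)).map fun j =>
    ((List.range (n - 1 - j)).map fun i => (gen' i : BraidMonoid n)).prod).prod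

/-- The set of simple braids: left divisors of `Δ_n`. -/
def Simples (n : ℕ) : Set (BraidMonoid n) := {x | ldvd x (garside n)}

/-- `L(y) = {σ_i : σ_i ≤_l y}` (as a set of indices). -/
def Lset {n : ℕ} (y : BraidMonoid n) : Set (Fin (n - 1)) := {i | ldvd (gen i) y}

/-- `R(x) = {σ_i : x · σ_i ∉ S}` (as a set of indices). -/
def Rset {n : ℕ} (x : BraidMonoid n) : Set (Fin (n - 1)) :=
  {i | x * gen i ∉ Simples n}

/-- The relation `x → y` between simple braids: `L(y) ⊆ R(x)`. -/
def Arrow {n : ℕ} (x y : BraidMonoid n) : Prop := Lset y ⊆ Rset x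

/-- The Möbius polynomial of the positive braid monoid:
`H_0 = H_1 = 1`, `H_n = ∑_{k=1}^{n} (-1)^{k+1} t^{k(k-1)/2} H_{n-k}`. -/
noncomputable def mobiusH : ℕ → Polynomial ℤ
  | 0 => 1
  | 1 => 1
  | (n + 2) =>
      ∑ j ∈ Finset.range (n + 2),
        (-1 : Polynomial ℤ) ^ j * Polynomial.X ^ ((j + 1) * j / 2) * mobiusH (n + 1 - j)
  termination_by n => n
  decreasing_by omega


/-! ### Auxiliary development -/

section Aux

open Equiv Finset

/-- adjacent transposition -/
def sw (a : ℕ) : Equiv.Perm ℕ := Equiv.swap a (a+1)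

lemma sw_apply (a m : ℕ) : sw a m = if m = a then a+1 else if m = a+1 then a else m := by
  simp [sw, Equiv.swap_apply_def]

/-- the permutation representation on the free monoid -/
def piF (n : ℕ) : FreeMonoid (Fin (n-1)) →* Equiv.Perm ℕ :=
  FreeMonoid.lift (fun a => sw a.val)

set_option maxHeartbeats 1000000 in
lemma braidrel_perm {n : ℕ} : ∀ x y, BraidRel n x y → piF n x = piF n y := by
  intro x y h
  cases h with
  | comm i j hij =>
      simp only [map_mul, piF, FreeMonoid.lift_eval_of]
      ext m
      simp only [Equiv.Perm.mul_apply, sw_apply]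
      split_ifs <;> omega
  | braid i j hij =>
      simp only [map_mul, piF, FreeMonoid.lift_eval_of]
      ext m
      simp only [Equiv.Perm.mul_apply, sw_apply]
      split_ifs <;> omega

/-- the permutation representation -/
def pib (n : ℕ) : BraidMonoid n →* Equiv.Perm ℕ :=
  Con.lift _ (piF n) (Con.conGen_le.mpr (by intro x y h; exact (Con.ker_rel _).mpr (braidrel_perm x y h)))

/-- the length function on the free monoid -/
def lenF (n : ℕ) : FreeMonoid (Fin (n-1)) →* Multiplicative ℕ :=
  FreeMonoid.lift (fun _ => Multiplicative.ofAdd 1)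

lemma braidrel_len {n : ℕ} : ∀ x y, BraidRel n x y → lenF n x = lenF n y := by
  intro x y h
  cases h with
  | comm i j hij => simp only [map_mul, lenF, FreeMonoid.lift_eval_of]
  | braid i j hij => simp only [map_mul, lenF, FreeMonoid.lift_eval_of]

/-- the length homomorphism -/
def lenH (n : ℕ) : BraidMonoid n →* Multiplicative ℕ :=
  Con.lift _ (lenF n) (Con.conGen_le.mpr (by intro x y h; exact (Con.ker_rel _).mpr (braidrel_len x y h)))

/-- length -/
def ell {n : ℕ} (x : BraidMonoid n) : ℕ := Multiplicative.toAdd (lenH n x)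

lemma ell_mul {n : ℕ} (x y : BraidMonoid n) : ell (x*y) = ell x + ell y := by
  simp [ell, map_mul]

lemma ell_one {n : ℕ} : ell (1 : BraidMonoid n) = 0 := by simp [ell]

lemma pib_gen {n : ℕ} (i : Fin (n-1)) : pib n (gen i) = sw i.val := by
  rfl

lemma ell_gen {n : ℕ} (i : Fin (n-1)) : ell (gen i) = 1 := by
  rfl

/-- words -/
def mkw {n : ℕ} (w : List (Fin (n-1))) : BraidMonoid n :=
  (conGen (BraidRel n)).mk' (FreeMonoid.ofList w)

lemma mkw_nil {n : ℕ} : mkw ([] : List (Fin (n-1))) = 1 := by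
  simp [mkw]; rfl

lemma mkw_append {n : ℕ} (w v : List (Fin (n-1))) : mkw (w ++ v) = mkw w * mkw v := by
  simp [mkw, FreeMonoid.ofList_append, map_mul]; rfl

lemma mkw_cons {n : ℕ} (a : Fin (n-1)) (w : List (Fin (n-1))) :
    mkw (a :: w) = gen a * mkw w := by
  simp [mkw, FreeMonoid.ofList_cons, map_mul]; rfl

lemma mkw_singleton {n : ℕ} (a : Fin (n-1)) : mkw [a] = gen a := by
  rw [mkw_cons, mkw_nil, mul_one]

lemma exists_word {n : ℕ} (x : BraidMonoid n) : ∃ w, x = mkw w := by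
  obtain ⟨f, rfl⟩ := Con.mk'_surjective (c := conGen (BraidRel n)) x
  exact ⟨FreeMonoid.toList f, by simp [mkw, FreeMonoid.ofList_toList]; rfl⟩

lemma ell_mkw {n : ℕ} (w : List (Fin (n-1))) : ell (mkw w) = w.length := by
  induction w with
  | nil => simp [mkw_nil, ell_one]
  | cons a w ih => rw [mkw_cons, ell_mul, ell_gen, ih, List.length_cons]; omega

lemma ell_eq_zero {n : ℕ} (x : BraidMonoid n) (h : ell x = 0) : x = 1 := by
  obtain ⟨w, rfl⟩ := exists_word x
  rw [ell_mkw] at h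
  rw [List.length_eq_zero_iff] at h
  rw [h, mkw_nil]

lemma ell_eq_one {n : ℕ} (x : BraidMonoid n) (h : ell x = 1) : ∃ a, x = gen a := by
  obtain ⟨w, rfl⟩ := exists_word x
  rw [ell_mkw] at h
  obtain ⟨a, rfl⟩ := List.length_eq_one_iff.mp h
  exact ⟨a, (mkw_singleton a).symm⟩

end Aux
section Cox
open Equiv Finset

lemma perm_inv_apply_self (ρ : Equiv.Perm ℕ) (x : ℕ) : ρ⁻¹ (ρ x) = x :=
  Equiv.symm_apply_apply ρ x

lemma perm_apply_inv_self (ρ : Equiv.Perm ℕ) (x : ℕ) : ρ (ρ⁻¹ x) = x :=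
  Equiv.apply_symm_apply ρ x

/-- supported on `[0,n)` -/
def Supp (n : ℕ) (ρ : Equiv.Perm ℕ) : Prop := ∀ m, n ≤ m → ρ m = m

lemma supp_lt {n : ℕ} {ρ : Equiv.Perm ℕ} (h : Supp n ρ) {m : ℕ} (hm : m < n) : ρ m < n := by
  by_contra hc
  push_neg at hc
  have := h _ hc
  have := ρ.injective this
  omega

lemma supp_inv {n : ℕ} {ρ : Equiv.Perm ℕ} (h : Supp n ρ) : Supp n ρ⁻¹ := by
  intro m hm
  have := h m hm
  conv_lhs => rw [← this]
  exact perm_inv_apply_self ρ m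

lemma supp_one {n : ℕ} : Supp n (1 : Equiv.Perm ℕ) := fun m _ => rfl

lemma supp_mul {n : ℕ} {ρ τ : Equiv.Perm ℕ} (h1 : Supp n ρ) (h2 : Supp n τ) :
    Supp n (ρ * τ) := by
  intro m hm
  simp only [Equiv.Perm.mul_apply, h2 m hm, h1 m hm]

lemma supp_sw {n : ℕ} {a : ℕ} (h : a + 1 < n) : Supp n (sw a) := by
  intro m hm
  rw [sw_apply]
  split_ifs <;> omega

lemma supp_inv_lt {n : ℕ} {ρ : Equiv.Perm ℕ} (h : Supp n ρ) {m : ℕ} (hm : m < n) :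
    ρ⁻¹ m < n := supp_lt (supp_inv h) hm

/-- inversion set -/
def InvS (n : ℕ) (ρ : Equiv.Perm ℕ) : Finset (ℕ × ℕ) :=
  (Finset.range n ×ˢ Finset.range n).filter fun p => p.1 < p.2 ∧ ρ p.2 < ρ p.1

/-- Coxeter length = number of inversions -/
def cox (n : ℕ) (ρ : Equiv.Perm ℕ) : ℕ := (InvS n ρ).card

lemma mem_InvS {n : ℕ} {ρ : Equiv.Perm ℕ} {p : ℕ × ℕ} :
    p ∈ InvS n ρ ↔ p.1 < n ∧ p.2 < n ∧ p.1 < p.2 ∧ ρ p.2 < ρ p.1 := by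
  simp only [InvS, Finset.mem_filter, Finset.mem_product, Finset.mem_range]
  tauto

lemma cox_one {n : ℕ} : cox n 1 = 0 := by
  rw [cox, Finset.card_eq_zero, Finset.eq_empty_iff_forall_notMem]
  intro p hp
  rw [mem_InvS] at hp
  simp only [Equiv.Perm.one_apply] at hp
  omega

lemma sw_lt {n i m : ℕ} (h : i + 1 < n) (hm : m < n) : sw i m < n := by
  rw [sw_apply]; split_ifs <;> omega

lemma sw_sw (i m : ℕ) : sw i (sw i m) = m := Equiv.swap_apply_self _ _ _

lemma sw_sort {i a b : ℕ} (hab : a < b) (hne : ¬(a = i ∧ b = i + 1)) :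
    sw i a < sw i b := by
  rw [sw_apply, sw_apply]
  split_ifs <;> omega

lemma erase_card_eq {n : ℕ} (ρ : Equiv.Perm ℕ) (i : ℕ) (h : i + 1 < n) :
    ((InvS n (ρ * sw i)).erase (i, i+1)).card = ((InvS n ρ).erase (i, i+1)).card := by
  apply Finset.card_bij' (i := fun p _ => (sw i p.1, sw i p.2))
    (j := fun p _ => (sw i p.1, sw i p.2))
  · intro p hp
    rw [Finset.mem_erase, mem_InvS] at hp
    obtain ⟨hpne, h1, h2, h3, h4⟩ := hp
    rw [Finset.mem_erase, mem_InvS]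
    have hne : ¬(p.1 = i ∧ p.2 = i + 1) := by
      intro hc; exact hpne (Prod.ext hc.1 hc.2)
    refine ⟨?_, sw_lt h h1, sw_lt h h2, sw_sort h3 hne, ?_⟩
    · intro hc
      rw [Prod.ext_iff] at hc
      simp only at hc
      have e1 := congrArg (sw i) hc.1
      have e2 := congrArg (sw i) hc.2
      rw [sw_sw] at e1 e2
      rw [sw_apply] at e1
      rw [sw_apply] at e2
      split_ifs at e1 e2 <;> omega
    · simpa [Equiv.Perm.mul_apply, sw_sw] using h4
  · intro p hp
    rw [Finset.mem_erase, mem_InvS] at hp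
    obtain ⟨hpne, h1, h2, h3, h4⟩ := hp
    rw [Finset.mem_erase, mem_InvS]
    have hne : ¬(p.1 = i ∧ p.2 = i + 1) := by
      intro hc; exact hpne (Prod.ext hc.1 hc.2)
    refine ⟨?_, sw_lt h h1, sw_lt h h2, sw_sort h3 hne, ?_⟩
    · intro hc
      rw [Prod.ext_iff] at hc
      simp only at hc
      have e1 := congrArg (sw i) hc.1
      have e2 := congrArg (sw i) hc.2
      rw [sw_sw] at e1 e2
      rw [sw_apply] at e1
      rw [sw_apply] at e2
      split_ifs at e1 e2 <;> omega
    · simpa [Equiv.Perm.mul_apply, sw_sw] using h4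
  · intro p _
    simp [sw_sw]
  · intro p _
    simp [sw_sw]

lemma cox_mul_sw_le {n : ℕ} (ρ : Equiv.Perm ℕ) (i : ℕ) (h : i + 1 < n) :
    cox n (ρ * sw i) ≤ cox n ρ + 1 := by
  have hrc := erase_card_eq ρ i h
  have h1 : cox n (ρ * sw i) ≤ ((InvS n (ρ * sw i)).erase (i, i+1)).card + 1 := by
    show (InvS n (ρ * sw i)).card ≤ _
    by_cases hm : (i, i+1) ∈ InvS n (ρ * sw i)
    · have := Finset.card_erase_add_one hm; omega
    · rw [Finset.erase_eq_of_notMem hm]; omega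
  have h2 : ((InvS n ρ).erase (i, i+1)).card ≤ cox n ρ :=
    Finset.card_le_card (Finset.erase_subset _ _)
  omega

lemma cox_mul_sw_lt {n : ℕ} (ρ : Equiv.Perm ℕ) (i : ℕ) (h : i + 1 < n)
    (hd : ρ (i+1) < ρ i) : cox n (ρ * sw i) < cox n ρ := by
  have hmemρ : (i, i+1) ∈ InvS n ρ := by
    rw [mem_InvS]; exact ⟨by omega, h, by omega, hd⟩
  have hnot : (i, i+1) ∉ InvS n (ρ * sw i) := by
    rw [mem_InvS]
    intro hc
    obtain ⟨-, -, -, hc⟩ := hc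
    simp only [Equiv.Perm.mul_apply, sw_apply] at hc
    simp at hc
    omega
  have hrc := erase_card_eq ρ i h
  rw [Finset.erase_eq_of_notMem hnot] at hrc
  have : ((InvS n ρ).erase (i, i+1)).card < (InvS n ρ).card :=
    Finset.card_erase_lt_of_mem hmemρ
  unfold cox
  omega

lemma left_desc_of_cox_lt {n : ℕ} {ρ : Equiv.Perm ℕ} {i : ℕ} (h : i + 1 < n)
    (hs : Supp n ρ) (hc : cox n (sw i * ρ) < cox n ρ) : ρ⁻¹ (i+1) < ρ⁻¹ i := by
  by_contra hcon
  push_neg at hcon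
  have hne : ρ⁻¹ i ≠ ρ⁻¹ (i+1) := fun hc => by
    have := ρ⁻¹.injective hc; omega
  set a := ρ⁻¹ i with ha
  set b := ρ⁻¹ (i+1) with hb
  have hab : a < b := by omega
  have hρa : ρ a = i := perm_apply_inv_self ρ i
  have hρb : ρ b = i + 1 := perm_apply_inv_self ρ (i+1)
  have seteq : (InvS n (sw i * ρ)).erase (a, b) = (InvS n ρ).erase (a, b) := by
    ext p
    rw [Finset.mem_erase, Finset.mem_erase, mem_InvS, mem_InvS]
    constructor
    · rintro ⟨hpne, h1, h2, h3, h4⟩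
      refine ⟨hpne, h1, h2, h3, ?_⟩
      simp only [Equiv.Perm.mul_apply, sw_apply] at h4
      have hinj : ρ p.1 ≠ ρ p.2 := fun hc => by have := ρ.injective hc; omega
      have hq : ¬(p.1 = a ∧ p.2 = b) := fun hc => hpne (Prod.ext hc.1 hc.2)
      have hx1 : ¬(ρ p.1 = i ∧ ρ p.2 = i + 1) := by
        intro hc
        apply hq
        constructor
        · rw [ha, ← hc.1, perm_inv_apply_self ρ]
        · rw [hb, ← hc.2, perm_inv_apply_self ρ]
      have hx2 : ¬(ρ p.1 = i + 1 ∧ ρ p.2 = i) := by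
        intro hc
        have e1 : p.1 = b := by rw [hb, ← hc.1, perm_inv_apply_self ρ]
        have e2 : p.2 = a := by rw [ha, ← hc.2, perm_inv_apply_self ρ]
        omega
      split_ifs at h4 <;> omega
    · rintro ⟨hpne, h1, h2, h3, h4⟩
      refine ⟨hpne, h1, h2, h3, ?_⟩
      simp only [Equiv.Perm.mul_apply, sw_apply]
      have hinj : ρ p.1 ≠ ρ p.2 := fun hc => by have := ρ.injective hc; omega
      have hq : ¬(p.1 = a ∧ p.2 = b) := fun hc => hpne (Prod.ext hc.1 hc.2)
      have hx1 : ¬(ρ p.1 = i ∧ ρ p.2 = i + 1) := by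
        intro hc
        apply hq
        constructor
        · rw [ha, ← hc.1, perm_inv_apply_self ρ]
        · rw [hb, ← hc.2, perm_inv_apply_self ρ]
      have hx2 : ¬(ρ p.1 = i + 1 ∧ ρ p.2 = i) := by
        intro hc
        have e1 : p.1 = b := by rw [hb, ← hc.1, perm_inv_apply_self ρ]
        have e2 : p.2 = a := by rw [ha, ← hc.2, perm_inv_apply_self ρ]
        omega
      split_ifs <;> omega
  have hqmem : (a, b) ∈ InvS n (sw i * ρ) := by
    rw [mem_InvS]
    refine ⟨supp_inv_lt hs (by omega), supp_inv_lt hs h, hab, ?_⟩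
    simp only [Equiv.Perm.mul_apply, hρa, hρb, sw_apply]
    simp
  have hqnot : (a, b) ∉ InvS n ρ := by
    rw [mem_InvS]
    intro hc
    rw [hρa, hρb] at hc
    omega
  have e1 : cox n (sw i * ρ) = ((InvS n (sw i * ρ)).erase (a,b)).card + 1 :=
    (Finset.card_erase_add_one hqmem).symm
  have e2 : ((InvS n ρ).erase (a,b)).card = cox n ρ :=
    congrArg Finset.card (Finset.erase_eq_of_notMem hqnot)
  rw [seteq, e2] at e1
  omega

lemma cox_mul_word_le {n : ℕ} (base : Equiv.Perm ℕ) (w : List (Fin (n-1))) :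
    cox n (base * pib n (mkw w)) ≤ cox n base + w.length := by
  induction w using List.reverseRecOn generalizing base with
  | nil => simp [mkw_nil]
  | append_singleton w a ih =>
      rw [mkw_append, mkw_singleton, map_mul, pib_gen, ← mul_assoc]
      have h1 := cox_mul_sw_le (n := n) (base * pib n (mkw w)) a.val (by have := a.2; omega)
      have h2 := ih base
      simp only [List.length_append, List.length_singleton]
      omega

lemma cox_le_ell {n : ℕ} (x : BraidMonoid n) : cox n (pib n x) ≤ ell x := by
  obtain ⟨w, rfl⟩ := exists_word x
  have := cox_mul_word_le (n := n) 1 w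
  rw [one_mul, cox_one] at this
  rw [ell_mkw]
  omega

lemma supp_pib {n : ℕ} (x : BraidMonoid n) : Supp n (pib n x) := by
  obtain ⟨w, rfl⟩ := exists_word x
  induction w with
  | nil => rw [mkw_nil, map_one]; exact supp_one
  | cons a w ih =>
      rw [mkw_cons, map_mul, pib_gen]
      exact supp_mul (supp_sw (by have := a.2; omega)) ih

lemma sum_perm {n : ℕ} {ρ : Equiv.Perm ℕ} (hs : Supp n ρ) :
    ∑ m ∈ Finset.range n, ρ m = ∑ m ∈ Finset.range n, m := by
  apply Finset.sum_nbij' (i := fun m => ρ m) (j := fun m => ρ⁻¹ m)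
  · intro a ha; rw [Finset.mem_range] at *; exact supp_lt hs ha
  · intro a ha; rw [Finset.mem_range] at *; exact supp_inv_lt hs ha
  · intro a _; exact perm_inv_apply_self ρ a
  · intro a _; exact perm_apply_inv_self ρ a
  · intro a _; rfl

lemma eq_one_of_no_descent {n : ℕ} {ρ : Equiv.Perm ℕ} (hs : Supp n ρ)
    (h : ∀ i, i + 1 < n → ρ i < ρ (i+1)) : ρ = 1 := by
  have hg : ∀ m, m < n → m ≤ ρ m := by
    intro m
    induction m with
    | zero => omega
    | succ m ih => intro hm; have := ih (by omega); have := h m (by omega); omega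
  have hsum := sum_perm hs
  have := (Finset.sum_eq_sum_iff_of_le (s := Finset.range n)
      (f := fun m => m) (g := fun m => ρ m)
      (fun m hm => hg m (Finset.mem_range.mp hm))).mp hsum.symm
  ext m
  by_cases hm : m < n
  · exact ((this m (Finset.mem_range.mpr hm)).symm)
  · exact hs m (by omega)

/-- order-reversing permutation of `[0,n)` -/
def rev (n : ℕ) : Equiv.Perm ℕ :=
  Function.Involutive.toPerm (fun m => if m < n then n - 1 - m else m)
    (by intro m; simp only; split_ifs <;> omega)

lemma rev_apply (n m : ℕ) : rev n m = if m < n then n - 1 - m else m := rfl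

lemma rev_inv_apply (n m : ℕ) : (rev n)⁻¹ m = if m < n then n - 1 - m else m := rfl

lemma supp_rev {n : ℕ} : Supp n (rev n) := by
  intro m hm; rw [rev_apply]; split_ifs <;> omega

lemma eq_rev_of_all_descent {n : ℕ} {ρ : Equiv.Perm ℕ} (hs : Supp n ρ)
    (h : ∀ i, i + 1 < n → ρ (i+1) < ρ i) : ρ = rev n := by
  have hg : ∀ m, m < n → ρ m + m ≤ n - 1 := by
    intro m
    induction m with
    | zero => intro h0; have := supp_lt hs h0; omega
    | succ m ih => intro hm; have := ih (by omega); have := h m (by omega); omega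
  have hsum := sum_perm hs
  have hrefl : ∑ m ∈ Finset.range n, (n - 1 - m) = ∑ m ∈ Finset.range n, m :=
    Finset.sum_range_reflect (fun i => i) n
  have heq : ∑ m ∈ Finset.range n, ρ m = ∑ m ∈ Finset.range n, (n - 1 - m) := by omega
  have := (Finset.sum_eq_sum_iff_of_le (s := Finset.range n)
      (f := fun m => ρ m) (g := fun m => n - 1 - m)
      (fun m hm => by have := hg m (Finset.mem_range.mp hm); omega)).mp heq
  ext m
  rw [rev_apply]
  by_cases hm : m < n
  · have := this m (Finset.mem_range.mpr hm); simp only [hm, if_true]; omega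
  · simp only [hm, if_false]; exact hs m (by omega)

lemma card_sorted (K : ℕ) :
    ((Finset.range K ×ˢ Finset.range K).filter fun p : ℕ × ℕ => p.1 < p.2).card
      = ∑ i ∈ Finset.range K, i := by
  induction K with
  | zero => simp
  | succ K ih =>
      have hsplit : ((Finset.range (K+1) ×ˢ Finset.range (K+1)).filter
            fun p : ℕ × ℕ => p.1 < p.2)
          = ((Finset.range K ×ˢ Finset.range K).filter fun p : ℕ × ℕ => p.1 < p.2)
            ∪ (Finset.range K).map ⟨fun a => (a, K), fun a b hab => by
                simpa using congrArg Prod.fst hab⟩ := by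
        ext p
        simp only [Finset.mem_filter, Finset.mem_product, Finset.mem_range,
          Finset.mem_union, Finset.mem_map, Function.Embedding.coeFn_mk]
        constructor
        · rintro ⟨⟨h1, h2⟩, h3⟩
          by_cases hk : p.2 = K
          · right
            refine ⟨p.1, by omega, ?_⟩
            exact Prod.ext rfl hk.symm
          · left; omega
        · rintro (⟨⟨h1, h2⟩, h3⟩ | ⟨a, ha, hfa⟩)
          · exact ⟨⟨by omega, by omega⟩, h3⟩
          · have e1 : p.1 = a := by subst hfa; rfl
            have e2 : p.2 = K := by subst hfa; rfl
            omega
      rw [hsplit, Finset.card_union_of_disjoint, ih, Finset.card_map,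
        Finset.card_range, Finset.sum_range_succ]
      rw [Finset.disjoint_left]
      intro p hp hq
      simp only [Finset.mem_map, Function.Embedding.coeFn_mk] at hq
      obtain ⟨a, ha, hfa⟩ := hq
      simp only [Finset.mem_filter, Finset.mem_product, Finset.mem_range] at hp
      have e2 : p.2 = K := by subst hfa; rfl
      omega

lemma InvS_rev (n : ℕ) :
    InvS n (rev n) = (Finset.range n ×ˢ Finset.range n).filter fun p : ℕ × ℕ => p.1 < p.2 := by
  ext p
  rw [mem_InvS, Finset.mem_filter, Finset.mem_product, Finset.mem_range, Finset.mem_range]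
  rw [rev_apply, rev_apply]
  constructor
  · rintro ⟨h1, h2, h3, -⟩; exact ⟨⟨h1, h2⟩, h3⟩
  · rintro ⟨⟨h1, h2⟩, h3⟩
    refine ⟨h1, h2, h3, ?_⟩
    split_ifs
    omega

lemma cox_rev (n : ℕ) : cox n (rev n) = ∑ i ∈ Finset.range n, i := by
  rw [cox, InvS_rev, card_sorted]

lemma cox_sw {n i : ℕ} (h : i + 1 < n) : cox n (sw i) = 1 := by
  have : InvS n (sw i) = {(i, i+1)} := by
    ext p
    rw [mem_InvS, Finset.mem_singleton]
    constructor
    · rintro ⟨h1, h2, h3, h4⟩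
      rw [sw_apply, sw_apply] at h4
      rw [Prod.ext_iff]
      simp only
      split_ifs at h4 <;> omega
    · intro hp
      rw [hp]
      simp only
      refine ⟨by omega, by omega, by omega, ?_⟩
      rw [sw_apply, sw_apply]
      simp only [if_pos rfl]
      split_ifs <;> omega
  rw [cox, this, Finset.card_singleton]

end Cox
section Words
open Equiv Finset

lemma braid_eq {n : ℕ} (x y : FreeMonoid (Fin (n-1))) (h : BraidRel n x y) :
    (conGen (BraidRel n)).mk' x = (conGen (BraidRel n)).mk' y :=
  (Con.eq _).mpr (ConGen.Rel.of _ _ h)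

lemma gen_mul {n : ℕ} (i j : Fin (n-1)) :
    gen i * gen j = (conGen (BraidRel n)).mk' (FreeMonoid.of i * FreeMonoid.of j) := by
  rw [map_mul]; rfl

lemma gen_comm {n : ℕ} (i j : Fin (n-1)) (h : i.val + 2 ≤ j.val) :
    gen i * gen j = gen j * gen i := by
  rw [gen_mul, gen_mul]
  exact braid_eq _ _ (BraidRel.comm i j h)

lemma gen_braid {n : ℕ} (i j : Fin (n-1)) (h : i.val + 1 = j.val) :
    gen i * gen j * gen i = gen j * gen i * gen j := by
  have e1 : gen i * gen j * gen i
      = (conGen (BraidRel n)).mk' (FreeMonoid.of i * FreeMonoid.of j * FreeMonoid.of i) := by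
    rw [map_mul, map_mul]; rfl
  have e2 : gen j * gen i * gen j
      = (conGen (BraidRel n)).mk' (FreeMonoid.of j * FreeMonoid.of i * FreeMonoid.of j) := by
    rw [map_mul, map_mul]; rfl
  rw [e1, e2]
  exact braid_eq _ _ (BraidRel.braid i j h)

lemma gen'_eq {n a : ℕ} (h : a < n-1) : (gen' a : BraidMonoid n) = gen ⟨a, h⟩ := dif_pos h

lemma gen'_comm {n a b : ℕ} (h : a + 2 ≤ b) (hb : b < n-1) :
    (gen' a : BraidMonoid n) * gen' b = gen' b * gen' a := by
  rw [gen'_eq (show a < n-1 by omega), gen'_eq hb]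
  exact gen_comm _ _ h

lemma gen'_braid {n a : ℕ} (h : a + 1 < n-1) :
    (gen' a : BraidMonoid n) * gen' (a+1) * gen' a = gen' (a+1) * gen' a * gen' (a+1) := by
  rw [gen'_eq (show a < n-1 by omega), gen'_eq h]
  exact gen_braid _ _ rfl

lemma pib_gen' {n a : ℕ} (h : a < n-1) : pib n (gen' a) = sw a := by
  rw [gen'_eq h, pib_gen]

lemma ell_gen' {n a : ℕ} (h : a < n-1) : ell (gen' a : BraidMonoid n) = 1 := by
  rw [gen'_eq h, ell_gen]

/-- evaluation of an ℕ-indexed word -/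
def evalN {n : ℕ} (l : List ℕ) : BraidMonoid n := (l.map gen').prod

lemma evalN_nil {n : ℕ} : (evalN [] : BraidMonoid n) = 1 := rfl

lemma evalN_cons {n : ℕ} (a : ℕ) (l : List ℕ) :
    (evalN (a :: l) : BraidMonoid n) = gen' a * evalN l := by
  simp [evalN]

lemma evalN_append {n : ℕ} (l l' : List ℕ) :
    (evalN (l ++ l') : BraidMonoid n) = evalN l * evalN l' := by
  simp [evalN]

lemma evalN_singleton {n : ℕ} (a : ℕ) : (evalN [a] : BraidMonoid n) = gen' a := by
  simp [evalN]

lemma gen'_comm_list {n c : ℕ} (l : List ℕ) (hc : c < n-1) (hl : ∀ a ∈ l, a + 2 ≤ c) :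
    (gen' c : BraidMonoid n) * evalN l = evalN l * gen' c := by
  induction l with
  | nil => rw [evalN_nil, mul_one, one_mul]
  | cons a l ih =>
      rw [evalN_cons, ← mul_assoc, ← gen'_comm (hl a (by simp)) hc, mul_assoc,
        ih (fun b hb => hl b (by simp [hb])), mul_assoc]

/-- descending word `[c-1, ..., 0]` -/
def Tw : ℕ → List ℕ
  | 0 => []
  | (c+1) => c :: Tw c

lemma Tw_zero : Tw 0 = [] := rfl

lemma Tw_succ (c : ℕ) : Tw (c+1) = c :: Tw c := rfl

lemma Tw_mem {c a : ℕ} (h : a ∈ Tw c) : a < c := by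
  induction c with
  | zero => simp [Tw] at h
  | succ c ih =>
      rw [Tw_succ, List.mem_cons] at h
      rcases h with h | h
      · omega
      · have := ih h; omega

/-- `T_c = σ_c σ_{c-1} ⋯ σ_1` (1-indexed), i.e. `evalN [c-1, ..., 0]` -/
def Tl {n : ℕ} (c : ℕ) : BraidMonoid n := evalN (Tw c)

lemma Tl_zero {n : ℕ} : (Tl 0 : BraidMonoid n) = 1 := rfl

lemma Tl_succ {n : ℕ} (c : ℕ) : (Tl (c+1) : BraidMonoid n) = gen' c * Tl c := by
  rw [Tl, Tw_succ, evalN_cons]; rfl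

/-- `D_k = T_1 T_2 ⋯ T_{k-1}`, the Garside element of the parabolic on the
first `k` strands -/
def Dl {n : ℕ} : ℕ → BraidMonoid n
  | 0 => 1
  | (k+1) => Dl k * Tl k

def Dw : ℕ → List ℕ
  | 0 => []
  | (k+1) => Dw k ++ Tw k

lemma Dl_eq {n : ℕ} (k : ℕ) : (Dl k : BraidMonoid n) = evalN (Dw k) := by
  induction k with
  | zero => rfl
  | succ k ih => rw [Dl, Dw, evalN_append, ih]; rfl

lemma Dw_mem {k a : ℕ} (h : a ∈ Dw k) : a + 2 ≤ k := by
  induction k with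
  | zero => simp [Dw] at h
  | succ k ih =>
      rw [Dw, List.mem_append] at h
      rcases h with h | h
      · have := ih h; omega
      · have := Tw_mem h; omega

lemma gen'_comm_Dl {n k : ℕ} (hk : k < n-1) :
    (gen' k : BraidMonoid n) * Dl k = Dl k * gen' k := by
  rw [Dl_eq]
  exact gen'_comm_list _ hk (fun a ha => Dw_mem ha)

/-- the shift lemma: `σ_a · T_c = T_c · σ_{a+1}` for `a+2 ≤ c` -/
lemma shift_T {n : ℕ} : ∀ c a : ℕ, a + 2 ≤ c → c ≤ n-1 →
    (gen' a : BraidMonoid n) * Tl c = Tl c * gen' (a+1) := by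
  intro c
  induction c with
  | zero => intro a h; omega
  | succ c ih =>
      intro a h hc
      by_cases hcase : a + 2 = c + 1
      · -- base case: c = a + 1
        have hca : c = a + 1 := by omega
        subst hca
        have hb : a + 1 < n - 1 := by omega
        have hcomm : (gen' (a+1) : BraidMonoid n) * Tl a = Tl a * gen' (a+1) := by
          rw [Tl]
          exact gen'_comm_list _ hb (fun b hb' => by have := Tw_mem hb'; omega)
        rw [Tl_succ, Tl_succ]
        simp only [← mul_assoc]
        rw [gen'_braid hb, mul_assoc (gen' (a+1) * gen' a), hcomm, ← mul_assoc]
      · -- step: a + 2 < c + 1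
        have h1 : a + 2 ≤ c := by omega
        rw [Tl_succ, ← mul_assoc, gen'_comm h1 (by omega), mul_assoc,
          ih a h1 (by omega), mul_assoc]

lemma shift_T_list {n : ℕ} (c : ℕ) (l : List ℕ) (hl : ∀ a ∈ l, a + 2 ≤ c) (hc : c ≤ n-1) :
    (evalN l : BraidMonoid n) * Tl c = Tl c * evalN (l.map (· + 1)) := by
  induction l with
  | nil => simp [evalN_nil]
  | cons a l ih =>
      rw [evalN_cons, List.map_cons, evalN_cons, mul_assoc,
        ih (fun b hb => hl b (by simp [hb])), ← mul_assoc,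
        shift_T c a (hl a (by simp)) hc, mul_assoc]

/-- ascending word element `σ_1 σ_2 ⋯ σ_c` -/
def Al {n : ℕ} (c : ℕ) : BraidMonoid n := evalN (List.range c)

lemma Al_succ {n : ℕ} (c : ℕ) : (Al (c+1) : BraidMonoid n) = Al c * gen' c := by
  rw [Al, List.range_succ, evalN_append, evalN_singleton]; rfl

lemma star_identity {n : ℕ} : ∀ k : ℕ, k ≤ n-1 →
    (Al k : BraidMonoid n) * Dl k = Dl k * Tl k := by
  intro k
  induction k with
  | zero => intro _; rfl
  | succ k ih =>
      intro hk
      have hk' : k ≤ n - 1 := by omega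
      have hcd : (gen' k : BraidMonoid n) * Dl k = Dl k * gen' k := gen'_comm_Dl (by omega)
      have hT : (Tl (k+1) : BraidMonoid n) = gen' k * Tl k := Tl_succ k
      rw [Al_succ, Dl]
      calc (Al k * gen' k : BraidMonoid n) * (Dl k * Tl k)
          = Al k * ((gen' k * Dl k) * Tl k) := by simp only [mul_assoc]
        _ = Al k * ((Dl k * gen' k) * Tl k) := by rw [hcd]
        _ = (Al k * Dl k) * (gen' k * Tl k) := by simp only [mul_assoc]
        _ = (Dl k * Tl k) * (gen' k * Tl k) := by rw [ih hk']
        _ = Dl k * Tl k * Tl (k+1) := by rw [hT]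

lemma garside_eq_Dl {n : ℕ} (hn : 1 ≤ n) : garside n = (Dl n : BraidMonoid n) := by
  have key : ∀ c : ℕ, c ≤ n-1 →
      ((List.range c).map (fun j => (Al (c - j) : BraidMonoid n))).prod = Dl (c+1) := by
    intro c
    induction c with
    | zero => intro _; simp [Dl, Tl_zero, Dw]
    | succ c ih =>
        intro hc
        rw [List.range_succ_eq_map, List.map_cons, List.map_map, List.prod_cons]
        have e1 : (List.map ((fun j => (Al (c + 1 - j) : BraidMonoid n)) ∘ Nat.succ)
            (List.range c)).prod = Dl (c+1) := by
          rw [← ih (by omega)]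
          congr 1
          apply List.map_congr_left
          intro a _
          simp only [Function.comp_apply, Nat.succ_eq_add_one]
          congr 1
          omega
        rw [e1]
        have e2 : c + 1 - 0 = c + 1 := by omega
        rw [e2, star_identity (c+1) hc]
        rfl
  have h2 : garside n = ((List.range (n-1)).map (fun j => (Al (n-1-j) : BraidMonoid n))).prod := by
    rfl
  rw [h2, key (n-1) le_rfl]
  congr 1
  omega

/-- permutation of `T_c` : the cycle `0 ↦ c, m ↦ m-1 (1 ≤ m ≤ c)` -/
def cycP (c : ℕ) : Equiv.Perm ℕ where
  toFun m := if m = 0 then c else if m ≤ c then m - 1 else m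
  invFun v := if v = c then 0 else if v < c then v + 1 else v
  left_inv := by
    intro m
    simp only
    split_ifs <;> first | omega | exact False.elim (by assumption)
  right_inv := by
    intro v
    simp only
    split_ifs <;> first | omega | exact False.elim (by assumption)

lemma cycP_apply (c m : ℕ) : cycP c m = if m = 0 then c else if m ≤ c then m - 1 else m := rfl

lemma pib_Tl {n : ℕ} : ∀ c : ℕ, c ≤ n-1 → pib n (Tl c) = cycP c := by
  intro c
  induction c with
  | zero =>
      intro _
      rw [Tl_zero, map_one]
      ext m
      rw [Equiv.Perm.one_apply, cycP_apply]
      split_ifs <;> omega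
  | succ c ih =>
      intro hc
      rw [Tl_succ, map_mul, pib_gen' (by omega), ih (by omega)]
      ext m
      rw [Equiv.Perm.mul_apply, cycP_apply, cycP_apply, sw_apply]
      split_ifs <;> omega

lemma pib_Dl {n : ℕ} : ∀ k : ℕ, k ≤ n → pib n (Dl k) = rev k := by
  intro k
  induction k with
  | zero =>
      intro _
      rw [show (Dl 0 : BraidMonoid n) = 1 from rfl, map_one]
      ext m
      rw [Equiv.Perm.one_apply, rev_apply]
      split_ifs <;> omega
  | succ k ih =>
      intro hk
      rw [Dl, map_mul, ih (by omega), pib_Tl k (by omega)]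
      ext m
      rw [Equiv.Perm.mul_apply, cycP_apply, rev_apply, rev_apply]
      split_ifs <;> omega

lemma pib_garside {n : ℕ} (hn : 1 ≤ n) : pib n (garside n) = rev n := by
  rw [garside_eq_Dl hn, pib_Dl n le_rfl]

lemma ell_Tl {n : ℕ} (c : ℕ) (hc : c ≤ n-1) : ell (Tl c : BraidMonoid n) = c := by
  induction c with
  | zero => rw [Tl_zero, ell_one]
  | succ c ih =>
      rw [Tl_succ, ell_mul, ell_gen' (by omega), ih (by omega)]
      omega

lemma ell_Dl {n : ℕ} : ∀ k : ℕ, k ≤ n → ell (Dl k : BraidMonoid n) = ∑ i ∈ Finset.range k, i := by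
  intro k
  induction k with
  | zero => intro _; rw [show (Dl 0 : BraidMonoid n) = 1 from rfl, ell_one]; simp
  | succ k ih =>
      intro hk
      rw [Dl, ell_mul, ih (by omega), ell_Tl k (by omega), Finset.sum_range_succ]

lemma ell_garside {n : ℕ} (hn : 1 ≤ n) : ell (garside n) = ∑ i ∈ Finset.range n, i := by
  rw [garside_eq_Dl hn, ell_Dl n le_rfl]

end Words
section Lift
open Equiv Finset

/-- prefix word `[k-1, k-2, ..., k-j]` of `Tw k` -/
def Pw (k j : ℕ) : List ℕ := (List.range j).map (fun t => k - 1 - t)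

lemma Pw_zero (k : ℕ) : Pw k 0 = [] := rfl

lemma Pw_succ (k j : ℕ) : Pw k (j+1) = Pw k j ++ [k - 1 - j] := by
  unfold Pw
  rw [List.range_succ, List.map_append]
  rfl

lemma Tw_split : ∀ j k : ℕ, j ≤ k → Tw k = Pw k j ++ Tw (k - j) := by
  intro j
  induction j with
  | zero => intro k _; rw [Pw_zero]; simp
  | succ j ih =>
      intro k hk
      have h1 : Tw (k - j) = (k - 1 - j) :: Tw (k - (j+1)) := by
        have e1 : k - j = (k - (j+1)) + 1 := by omega
        rw [e1, Tw_succ]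
        congr 1
        omega
      rw [ih k (by omega), h1, Pw_succ]
      simp

lemma pj_apply_low {n : ℕ} : ∀ j k : ℕ, j ≤ k → k ≤ n-1 →
    pib n (evalN (Pw k j)) (k - j) = k := by
  intro j
  induction j with
  | zero => intro k _ _; rw [Pw_zero, evalN_nil, map_one]; simp
  | succ j ih =>
      intro k hjk hkn
      rw [Pw_succ, evalN_append, evalN_singleton, map_mul, pib_gen' (by omega)]
      rw [Equiv.Perm.mul_apply]
      have e1 : sw (k - 1 - j) (k - (j+1)) = k - j := by
        rw [sw_apply]
        split_ifs <;> omega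
      rw [e1]
      exact ih k (by omega) hkn

lemma pj_apply_fix {n : ℕ} : ∀ j k : ℕ, j ≤ k → k ≤ n-1 → ∀ v, (k < v ∨ v < k - j) →
    pib n (evalN (Pw k j)) v = v := by
  intro j
  induction j with
  | zero => intro k _ _ v _; rw [Pw_zero, evalN_nil, map_one]; simp
  | succ j ih =>
      intro k hjk hkn v hv
      rw [Pw_succ, evalN_append, evalN_singleton, map_mul, pib_gen' (by omega)]
      rw [Equiv.Perm.mul_apply]
      have e1 : sw (k - 1 - j) v = v := by
        rw [sw_apply]
        split_ifs <;> omega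
      rw [e1]
      exact ih k (by omega) hkn v (by omega)

lemma lift_aux {n : ℕ} : ∀ k : ℕ, k ≤ n → ∀ ρ : Equiv.Perm ℕ, (∀ v, k ≤ v → ρ v = v) →
    ∃ (x : BraidMonoid n) (w : List ℕ),
      (∀ a ∈ w, a + 1 < k) ∧ x * evalN w = Dl k ∧ pib n x = ρ := by
  intro k
  induction k with
  | zero =>
      intro _ ρ hρ
      have hρ1 : ρ = 1 := by
        ext v; exact hρ v (by omega)
      refine ⟨1, [], by simp, ?_, by rw [map_one, hρ1]⟩
      rw [evalN_nil, mul_one]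
      rfl
  | succ k ih =>
      intro hk ρ hρ
      have hm : ρ⁻¹ k ≤ k := by
        by_contra hc
        push_neg at hc
        have h1 := hρ (ρ⁻¹ k) (by omega)
        rw [perm_apply_inv_self ρ] at h1
        omega
      set m := ρ⁻¹ k with hmdef
      set j := k - m with hjdef
      set P : List ℕ := Pw k j with hPdef
      set p := pib n (evalN P : BraidMonoid n) with hpdef
      have hkn : k ≤ n - 1 := by omega
      have hp1 : p (k - j) = k := pj_apply_low j k (by omega) hkn
      have hpinv : p⁻¹ k = k - j := by
        rw [Equiv.Perm.inv_def, Equiv.symm_apply_eq]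
        exact hp1.symm
      have hρ' : ∀ v, k ≤ v → (ρ * p⁻¹) v = v := by
        intro v hv
        rcases Nat.eq_or_lt_of_le hv with heq | hlt
        · have hv' : v = k := heq.symm
          rw [hv', Equiv.Perm.mul_apply, hpinv]
          have e1 : k - j = m := by omega
          rw [e1, hmdef]
          exact perm_apply_inv_self ρ k
        · have hfix : p v = v := pj_apply_fix j k (by omega) hkn v (by omega)
          have hfix' : p⁻¹ v = v := by
            rw [Equiv.Perm.inv_def, Equiv.symm_apply_eq]
            exact hfix.symm
          rw [Equiv.Perm.mul_apply, hfix']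
          exact hρ v (by omega)
      obtain ⟨x', w', hb', heq', hpi'⟩ := ih (by omega) (ρ * p⁻¹) hρ'
      refine ⟨x' * evalN P, Tw (k - j) ++ w'.map (· + 1), ?_, ?_, ?_⟩
      · intro a ha
        rw [List.mem_append] at ha
        rcases ha with ha | ha
        · have := Tw_mem ha; omega
        · rw [List.mem_map] at ha
          obtain ⟨b, hb, rfl⟩ := ha
          have := hb' b hb
          omega
      · have step1 : (Dl (k+1) : BraidMonoid n) = x' * evalN w' * Tl k := by
          rw [Dl, heq']
        have step2 : (evalN w' : BraidMonoid n) * Tl k = Tl k * evalN (w'.map (· + 1)) :=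
          shift_T_list k w' (fun a ha => by have := hb' a ha; omega) hkn
        have step3 : (Tl k : BraidMonoid n) = evalN P * evalN (Tw (k - j)) := by
          rw [Tl, Tw_split j k (by omega), evalN_append]
        have rhs : (Dl (k+1) : BraidMonoid n)
            = x' * evalN P * evalN (Tw (k - j) ++ w'.map (· + 1)) := by
          calc (Dl (k+1) : BraidMonoid n) = x' * evalN w' * Tl k := step1
            _ = x' * (evalN w' * Tl k) := by rw [mul_assoc]
            _ = x' * (Tl k * evalN (w'.map (· + 1))) := by rw [step2]
            _ = x' * (evalN P * evalN (Tw (k - j)) * evalN (w'.map (· + 1))) := by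
                rw [← step3]
            _ = x' * evalN P * evalN (Tw (k - j) ++ w'.map (· + 1)) := by
                rw [evalN_append]
                simp only [mul_assoc]
        exact rhs.symm
      · rw [map_mul, hpi', ← hpdef]
        rw [mul_assoc]
        rw [inv_mul_cancel, mul_one]

lemma simple_lift {n : ℕ} (hn : 1 ≤ n) (ρ : Equiv.Perm ℕ) (hρ : Supp n ρ) :
    ∃ x : BraidMonoid n, x ∈ Simples n ∧ pib n x = ρ := by
  obtain ⟨x, w, -, heq, hpi⟩ := lift_aux n le_rfl ρ (fun v hv => hρ v hv)
  refine ⟨x, ⟨evalN w, ?_⟩, hpi⟩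
  rw [garside_eq_Dl hn, ← heq]

end Lift
section SimpleTheory
open Equiv Finset

lemma simple_ell_eq_cox {n : ℕ} (hn : 1 ≤ n) {x : BraidMonoid n} (hx : x ∈ Simples n) :
    ell x = cox n (pib n x) := by
  obtain ⟨z, hz⟩ := hx
  obtain ⟨v, rfl⟩ := exists_word z
  have hsum : ell (garside n) = ell x + ell (mkw v) := by rw [hz, ell_mul]
  have h1 : cox n (pib n x) ≤ ell x := cox_le_ell x
  have h2 : cox n (pib n x * pib n (mkw v)) ≤ cox n (pib n x) + v.length :=
    cox_mul_word_le (pib n x) v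
  have h3 : pib n x * pib n (mkw v) = rev n := by
    rw [← map_mul, ← hz, pib_garside hn]
  have h4 : cox n (rev n) = ∑ i ∈ Finset.range n, i := cox_rev n
  have h5 : ell (garside n) = ∑ i ∈ Finset.range n, i := ell_garside hn
  have h6 : ell (mkw v) = v.length := ell_mkw v
  rw [h3, h4] at h2
  omega

lemma not_simple_of_desc {n : ℕ} (hn : 1 ≤ n) {u : BraidMonoid n} (hu : u ∈ Simples n)
    (i : Fin (n-1)) (hd : pib n u (i.val+1) < pib n u i.val) : u * gen i ∉ Simples n := by
  intro hc
  have h1 := simple_ell_eq_cox hn hc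
  rw [ell_mul, ell_gen, map_mul, pib_gen] at h1
  have h2 := cox_mul_sw_lt (n := n) (pib n u) i.val (by have := i.2; omega) hd
  have h3 := simple_ell_eq_cox hn hu
  omega

lemma lset_desc {n : ℕ} (hn : 1 ≤ n) {y : BraidMonoid n} (hy : y ∈ Simples n)
    {i : Fin (n-1)} (hi : i ∈ Lset y) :
    (pib n y)⁻¹ (i.val+1) < (pib n y)⁻¹ i.val := by
  obtain ⟨u, hu⟩ := hi
  apply left_desc_of_cox_lt (show i.val+1 < n by have := i.2; omega) (supp_pib y)
  have e1 : sw i.val * pib n y = pib n u := by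
    rw [hu, map_mul, pib_gen, ← mul_assoc]
    rw [show sw i.val * sw i.val = 1 from Equiv.swap_mul_self _ _, one_mul]
  rw [e1]
  have h2 : cox n (pib n u) ≤ ell u := cox_le_ell u
  have h3 : ell y = 1 + ell u := by rw [hu, ell_mul, ell_gen]
  have h4 : ell y = cox n (pib n y) := simple_ell_eq_cox hn hy
  omega

lemma arrow_of_desc {n : ℕ} (hn : 1 ≤ n) {u v : BraidMonoid n}
    (hu : u ∈ Simples n) (hv : v ∈ Simples n)
    (h : ∀ i : ℕ, i + 1 < n → (pib n v)⁻¹ (i+1) < (pib n v)⁻¹ i →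
        pib n u (i+1) < pib n u i) : Arrow u v := by
  intro i hi
  have hd := lset_desc hn hv hi
  have hdu := h i.val (by have := i.2; omega) hd
  exact not_simple_of_desc hn hu i hdu

lemma vertex_of {n : ℕ} (hn : 1 ≤ n) {x : BraidMonoid n} {ρ : Equiv.Perm ℕ}
    (hx : x ∈ Simples n) (hpi : pib n x = ρ)
    (hdesc : ∃ i, i + 1 < n ∧ ρ (i+1) < ρ i)
    (hasc : ∃ i, i + 1 < n ∧ ρ i < ρ (i+1)) :
    x ∈ Simples n ∧ x ≠ 1 ∧ x ≠ garside n := by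
  refine ⟨hx, ?_, ?_⟩
  · rintro rfl
    rw [map_one] at hpi
    obtain ⟨i, h1, h2⟩ := hdesc
    rw [← hpi] at h2
    simp at h2
  · rintro rfl
    rw [pib_garside hn] at hpi
    obtain ⟨i, h1, h2⟩ := hasc
    rw [← hpi, rev_apply, rev_apply] at h2
    split_ifs at h2 <;> omega

lemma sw_inj {a b : ℕ} (h : sw a = sw b) : a = b := by
  have h1 : sw a a = sw b a := by rw [h]
  rw [sw_apply, sw_apply] at h1
  split_ifs at h1 <;> omega

lemma pib_ne_one {n : ℕ} (hn : 1 ≤ n) {x : BraidMonoid n} (hx : x ∈ Simples n)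
    (hne : x ≠ 1) : pib n x ≠ 1 := by
  intro hc
  have h1 := simple_ell_eq_cox hn hx
  rw [hc, cox_one] at h1
  exact hne (ell_eq_zero x h1)

lemma pib_ne_rev {n : ℕ} (hn : 1 ≤ n) {x : BraidMonoid n} (hx : x ∈ Simples n)
    (hne : x ≠ garside n) : pib n x ≠ rev n := by
  intro hc
  have h1 := simple_ell_eq_cox hn hx
  rw [hc, cox_rev] at h1
  obtain ⟨z, hz⟩ := hx
  have h2 : ell (garside n) = ell x + ell z := by rw [hz, ell_mul]
  have h3 : ell (garside n) = ∑ i ∈ Finset.range n, i := ell_garside hn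
  have h4 : ell z = 0 := by omega
  have h5 : z = 1 := ell_eq_zero z h4
  rw [h5, mul_one] at hz
  exact hne hz.symm

lemma exists_desc {n : ℕ} {ρ : Equiv.Perm ℕ} (hs : Supp n ρ) (hne : ρ ≠ 1) :
    ∃ i, i + 1 < n ∧ ρ (i+1) < ρ i := by
  by_contra hc
  push_neg at hc
  apply hne
  apply eq_one_of_no_descent hs
  intro i hi
  have h1 := hc i hi
  have h2 : ρ i ≠ ρ (i+1) := fun hcc => by have := ρ.injective hcc; omega
  omega

lemma exists_asc {n : ℕ} {ρ : Equiv.Perm ℕ} (hs : Supp n ρ) (hne : ρ ≠ rev n) :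
    ∃ i, i + 1 < n ∧ ρ i < ρ (i+1) := by
  by_contra hc
  push_neg at hc
  apply hne
  apply eq_rev_of_all_descent hs
  intro i hi
  have h1 := hc i hi
  have h2 : ρ i ≠ ρ (i+1) := fun hcc => by have := ρ.injective hcc; omega
  omega

lemma gen_simple {n : ℕ} (hn : 3 ≤ n) (i : Fin (n-1)) : gen i ∈ Simples n := by
  have hi : i.val + 1 < n := by have := i.2; omega
  obtain ⟨x, hx, hpi⟩ := simple_lift (by omega) (sw i.val) (supp_sw hi)
  have h1 : ell x = 1 := by
    rw [simple_ell_eq_cox (by omega) hx, hpi, cox_sw hi]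
  obtain ⟨a, rfl⟩ := ell_eq_one x h1
  rw [pib_gen] at hpi
  have : a = i := Fin.ext (sw_inj hpi)
  rw [← this]
  exact hx

lemma sw_desc_iff {a t : ℕ} : sw a (t+1) < sw a t ↔ t = a := by
  rw [sw_apply, sw_apply]
  split_ifs <;> omega

lemma gen_vertex {n : ℕ} (hn : 3 ≤ n) (i : Fin (n-1)) :
    gen i ∈ Simples n ∧ gen i ≠ 1 ∧ gen i ≠ garside n := by
  have hi : i.val + 1 < n := by have := i.2; omega
  apply vertex_of (by omega) (gen_simple hn i) (pib_gen i)
  · exact ⟨i.val, hi, sw_desc_iff.mpr rfl⟩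
  · by_cases h0 : i.val = 0
    · refine ⟨1, by omega, ?_⟩
      rw [sw_apply, sw_apply]
      split_ifs <;> omega
    · refine ⟨i.val - 1, by omega, ?_⟩
      rw [sw_apply, sw_apply]
      split_ifs <;> omega

lemma sw_inv_self (a : ℕ) : (sw a)⁻¹ = sw a := Equiv.swap_inv _ _

lemma gen_arrow_self {n : ℕ} (hn : 3 ≤ n) (i : Fin (n-1)) : Arrow (gen i) (gen i) := by
  apply arrow_of_desc (by omega) (gen_simple hn i) (gen_simple hn i)
  intro t ht hd
  rw [pib_gen, sw_inv_self] at hd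
  rw [pib_gen]
  exact hd

end SimpleTheory
section ChainPerms
open Equiv Finset

set_option linter.unreachableTactic false
set_option linter.unusedTactic false

/-- the cycle `(a, a+1, ..., b)`: left-descent set `{a}`, right-descent set `{b-1}` -/
def vA (a b : ℕ) : Equiv.Perm ℕ where
  toFun p := if a < b ∧ a ≤ p ∧ p ≤ b then (if p = b then a else p + 1) else p
  invFun v := if a < b ∧ a ≤ v ∧ v ≤ b then (if v = a then b else v - 1) else v
  left_inv := by
    intro p; simp only
    split_ifs <;> first | omega | exact False.elim (by assumption)
  right_inv := by
    intro v; simp only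
    split_ifs <;> first | omega | exact False.elim (by assumption)

lemma vA_apply (a b m : ℕ) :
    vA a b m = if a < b ∧ a ≤ m ∧ m ≤ b then (if m = b then a else m + 1) else m := rfl

lemma vA_inv_apply (a b m : ℕ) :
    (vA a b)⁻¹ m = if a < b ∧ a ≤ m ∧ m ≤ b then (if m = a then b else m - 1) else m := rfl

lemma vA_supp {n a b : ℕ} (hb : b < n) : Supp n (vA a b) := by
  intro m hm
  rw [vA_apply]
  split_ifs <;> omega

lemma vA_leftdesc {a b i : ℕ} (hab : a < b)
    (h : (vA a b)⁻¹ (i+1) < (vA a b)⁻¹ i) : i = a := by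
  rw [vA_inv_apply, vA_inv_apply] at h
  split_ifs at h <;> omega

lemma vA_desc {a b : ℕ} (hab : a < b) : vA a b b < vA a b (b-1) := by
  rw [vA_apply, vA_apply]
  split_ifs <;> omega

lemma vA_asc {n a b : ℕ} (hab : a < b) (hb : b ≤ n - 1) (hn : 3 ≤ n) :
    ∃ i, i + 1 < n ∧ vA a b i < vA a b (i+1) := by
  by_cases h1 : 1 ≤ a
  · refine ⟨a - 1, by omega, ?_⟩
    rw [vA_apply, vA_apply]
    split_ifs <;> omega
  · by_cases h2 : 2 ≤ b
    · refine ⟨0, by omega, ?_⟩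
      rw [vA_apply, vA_apply]
      split_ifs <;> omega
    · refine ⟨1, by omega, ?_⟩
      rw [vA_apply, vA_apply]
      split_ifs <;> omega

/-- the inverse cycle `(b, b-1, ..., a)`: left-descent set `{b-1}`, right-descent set `{a}` -/
def vB (a b : ℕ) : Equiv.Perm ℕ where
  toFun p := if a < b ∧ a ≤ p ∧ p ≤ b then (if p = a then b else p - 1) else p
  invFun v := if a < b ∧ a ≤ v ∧ v ≤ b then (if v = b then a else v + 1) else v
  left_inv := by
    intro p; simp only
    split_ifs <;> first | omega | exact False.elim (by assumption)
  right_inv := by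
    intro v; simp only
    split_ifs <;> first | omega | exact False.elim (by assumption)

lemma vB_apply (a b m : ℕ) :
    vB a b m = if a < b ∧ a ≤ m ∧ m ≤ b then (if m = a then b else m - 1) else m := rfl

lemma vB_inv_apply (a b m : ℕ) :
    (vB a b)⁻¹ m = if a < b ∧ a ≤ m ∧ m ≤ b then (if m = b then a else m + 1) else m := rfl

lemma vB_supp {n a b : ℕ} (hb : b < n) : Supp n (vB a b) := by
  intro m hm
  rw [vB_apply]
  split_ifs <;> omega

lemma vB_leftdesc {a b i : ℕ} (hab : a < b)
    (h : (vB a b)⁻¹ (i+1) < (vB a b)⁻¹ i) : i = b - 1 := by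
  rw [vB_inv_apply, vB_inv_apply] at h
  split_ifs at h <;> omega

lemma vB_desc {a b : ℕ} (hab : a < b) : vB a b (a+1) < vB a b a := by
  rw [vB_apply, vB_apply]
  split_ifs <;> omega

lemma vB_asc {n a b : ℕ} (hab : a < b) (hb : b ≤ n - 1) (hn : 3 ≤ n) :
    ∃ i, i + 1 < n ∧ vB a b i < vB a b (i+1) := by
  by_cases h1 : b + 1 ≤ n - 1
  · refine ⟨b, by omega, ?_⟩
    rw [vB_apply, vB_apply]
    split_ifs <;> omega
  · by_cases h2 : a + 1 < b
    · refine ⟨b - 1, by omega, ?_⟩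
      rw [vB_apply, vB_apply]
      split_ifs <;> omega
    · -- a + 1 = b = n - 1 : vB = swap (a, a+1)
      by_cases h3 : 1 ≤ a
      · refine ⟨a - 1, by omega, ?_⟩
        rw [vB_apply, vB_apply]
        split_ifs <;> omega
      · refine ⟨1, by omega, ?_⟩
        rw [vB_apply, vB_apply]
        split_ifs <;> omega

/-- the riffle permutation: left-descent set `{⌈n/2⌉ - 1}`, right descents ⊇ evens -/
def rho2 (n : ℕ) : Equiv.Perm ℕ where
  toFun p := if p < n then
      (if p % 2 = 1 then p / 2
       else if p / 2 + (n - n/2) < n then p / 2 + (n - n/2) else p / 2)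
    else p
  invFun v := if v < n then
      (if v < n - n/2 then (if 2*v + 1 < n then 2*v + 1 else 2*v)
       else 2*(v - (n - n/2)))
    else v
  left_inv := by
    intro p; simp only
    split_ifs <;> first | omega | exact False.elim (by assumption)
  right_inv := by
    intro v; simp only
    split_ifs <;> first | omega | exact False.elim (by assumption)

lemma rho2_apply (n m : ℕ) : rho2 n m = if m < n then
      (if m % 2 = 1 then m / 2
       else if m / 2 + (n - n/2) < n then m / 2 + (n - n/2) else m / 2)
    else m := rfl

lemma rho2_inv_apply (n m : ℕ) : (rho2 n)⁻¹ m = if m < n then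
      (if m < n - n/2 then (if 2*m + 1 < n then 2*m + 1 else 2*m)
       else 2*(m - (n - n/2)))
    else m := rfl

lemma rho2_supp {n : ℕ} : Supp n (rho2 n) := by
  intro m hm
  rw [rho2_apply]
  split_ifs <;> omega

lemma rho2_leftdesc {n i : ℕ} (hn : 3 ≤ n) (hi : i + 1 < n)
    (h : (rho2 n)⁻¹ (i+1) < (rho2 n)⁻¹ i) : i = n - n/2 - 1 := by
  rw [rho2_inv_apply, rho2_inv_apply] at h
  split_ifs at h <;> omega

lemma rho2_desc_even {n i : ℕ} (hpar : i % 2 = 0) (hi : i + 1 < n) :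
    rho2 n (i+1) < rho2 n i := by
  rw [rho2_apply, rho2_apply]
  split_ifs <;> omega

lemma rho2_asc {n : ℕ} (hn : 3 ≤ n) : ∃ i, i + 1 < n ∧ rho2 n i < rho2 n (i+1) := by
  refine ⟨1, by omega, ?_⟩
  rw [rho2_apply, rho2_apply]
  split_ifs <;> omega

lemma rho2_desc {n : ℕ} (hn : 3 ≤ n) : ∃ i, i + 1 < n ∧ rho2 n (i+1) < rho2 n i :=
  ⟨0, by omega, rho2_desc_even rfl (by omega)⟩

/-- odds-then-evens two-run permutation: left descents = evens, right descents miss only `n/2-1` -/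
def rho3 (n : ℕ) : Equiv.Perm ℕ where
  toFun p := if p < n/2 then 2*(n/2 - p) - 1 else if p < n then 2*(n - 1 - p) else p
  invFun v := if v < n then (if v % 2 = 1 then n/2 - (v+1)/2 else n - 1 - v/2) else v
  left_inv := by
    intro p; simp only
    split_ifs <;> first | omega | exact False.elim (by assumption)
  right_inv := by
    intro v; simp only
    split_ifs <;> first | omega | exact False.elim (by assumption)

lemma rho3_apply (n m : ℕ) :
    rho3 n m = if m < n/2 then 2*(n/2 - m) - 1 else if m < n then 2*(n - 1 - m) else m := rfl

lemma rho3_inv_apply (n m : ℕ) :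
    (rho3 n)⁻¹ m = if m < n then (if m % 2 = 1 then n/2 - (m+1)/2 else n - 1 - m/2) else m := rfl

lemma rho3_supp {n : ℕ} : Supp n (rho3 n) := by
  intro m hm
  rw [rho3_apply]
  split_ifs <;> omega

lemma rho3_leftdesc {n i : ℕ} (hi : i + 1 < n)
    (h : (rho3 n)⁻¹ (i+1) < (rho3 n)⁻¹ i) : i % 2 = 0 := by
  rw [rho3_inv_apply, rho3_inv_apply] at h
  split_ifs at h <;> omega

lemma rho3_desc_ne {n i : ℕ} (hi : i + 1 < n) (hne : i ≠ n/2 - 1) :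
    rho3 n (i+1) < rho3 n i := by
  rw [rho3_apply, rho3_apply]
  split_ifs <;> omega

lemma rho3_asc {n : ℕ} (hn : 3 ≤ n) : ∃ i, i + 1 < n ∧ rho3 n i < rho3 n (i+1) := by
  refine ⟨n/2 - 1, by omega, ?_⟩
  rw [rho3_apply, rho3_apply]
  split_ifs <;> omega

lemma rho3_descex {n : ℕ} (hn : 3 ≤ n) : ∃ i, i + 1 < n ∧ rho3 n (i+1) < rho3 n i :=
  ⟨n/2, by omega, rho3_desc_ne (by omega) (by omega)⟩

/-- two-run permutation with junction `m`, first run `[n/2 - 1 - m, n/2 - 1]` (for `m < n/2`):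
left descents miss `n/2 - 1`, right descents = all but `m` -/
def rho4a (n m : ℕ) : Equiv.Perm ℕ where
  toFun p := if m < n/2 ∧ m + 2 ≤ n ∧ p < n then
      (if p ≤ m then n/2 - 1 - p else if p ≤ m + n - n/2 then n + m - p else n - 1 - p)
    else p
  invFun v := if m < n/2 ∧ m + 2 ≤ n ∧ v < n then
      (if v + m + 1 < n/2 then n - 1 - v else if v < n/2 then n/2 - 1 - v else n + m - v)
    else v
  left_inv := by
    intro p; simp only
    split_ifs <;> first | omega | exact False.elim (by assumption)
  right_inv := by
    intro v; simp only
    split_ifs <;> first | omega | exact False.elim (by assumption)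

lemma rho4a_apply (n m p : ℕ) : rho4a n m p = if m < n/2 ∧ m + 2 ≤ n ∧ p < n then
      (if p ≤ m then n/2 - 1 - p else if p ≤ m + n - n/2 then n + m - p else n - 1 - p)
    else p := rfl

lemma rho4a_inv_apply (n m v : ℕ) : (rho4a n m)⁻¹ v = if m < n/2 ∧ m + 2 ≤ n ∧ v < n then
      (if v + m + 1 < n/2 then n - 1 - v else if v < n/2 then n/2 - 1 - v else n + m - v)
    else v := rfl

lemma rho4a_supp {n m : ℕ} : Supp n (rho4a n m) := by
  intro v hv
  rw [rho4a_apply]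
  split_ifs <;> omega

lemma rho4a_leftdesc {n m i : ℕ} (hm : m < n/2) (hm2 : m + 2 ≤ n) (hi : i + 1 < n)
    (h : (rho4a n m)⁻¹ (i+1) < (rho4a n m)⁻¹ i) : i ≠ n/2 - 1 := by
  intro hc
  rw [rho4a_inv_apply, rho4a_inv_apply] at h
  split_ifs at h <;> omega

lemma rho4a_desc_ne {n m i : ℕ} (hm : m < n/2) (hm2 : m + 2 ≤ n) (hi : i + 1 < n)
    (hne : i ≠ m) : rho4a n m (i+1) < rho4a n m i := by
  rw [rho4a_apply, rho4a_apply]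
  split_ifs <;> omega

lemma rho4a_asc {n m : ℕ} (hm : m < n/2) (hm2 : m + 2 ≤ n) :
    ∃ i, i + 1 < n ∧ rho4a n m i < rho4a n m (i+1) := by
  refine ⟨m, by omega, ?_⟩
  rw [rho4a_apply, rho4a_apply]
  split_ifs <;> omega

lemma rho4a_descex {n m : ℕ} (hm : m < n/2) (hm2 : m + 2 ≤ n) (hn : 3 ≤ n) :
    ∃ i, i + 1 < n ∧ rho4a n m (i+1) < rho4a n m i := by
  by_cases h0 : m = 0
  · exact ⟨1, by omega, rho4a_desc_ne hm hm2 (by omega) (by omega)⟩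
  · exact ⟨0, by omega, rho4a_desc_ne hm hm2 (by omega) (by omega)⟩

/-- two-run permutation with junction `m`, for `n/2 ≤ m ≤ n-2`:
left descents miss `n/2 - 1`, right descents = all but `m` -/
def rho4b (n m : ℕ) : Equiv.Perm ℕ where
  toFun p := if n/2 ≤ m ∧ m + 2 ≤ n ∧ p < n then
      (if p + n/2 ≤ m then n - 1 - p else if p ≤ m then m - p else n + n/2 - 1 - p)
    else p
  invFun v := if n/2 ≤ m ∧ m + 2 ≤ n ∧ v < n then
      (if v < n/2 then m - v else if v + m ≤ n + n/2 - 2 then n + n/2 - 1 - v else n - 1 - v)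
    else v
  left_inv := by
    intro p; simp only
    split_ifs <;> first | omega | exact False.elim (by assumption)
  right_inv := by
    intro v; simp only
    split_ifs <;> first | omega | exact False.elim (by assumption)

lemma rho4b_apply (n m p : ℕ) : rho4b n m p = if n/2 ≤ m ∧ m + 2 ≤ n ∧ p < n then
      (if p + n/2 ≤ m then n - 1 - p else if p ≤ m then m - p else n + n/2 - 1 - p)
    else p := rfl

lemma rho4b_inv_apply (n m v : ℕ) : (rho4b n m)⁻¹ v = if n/2 ≤ m ∧ m + 2 ≤ n ∧ v < n then
      (if v < n/2 then m - v else if v + m ≤ n + n/2 - 2 then n + n/2 - 1 - v else n - 1 - v)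
    else v := rfl

lemma rho4b_supp {n m : ℕ} : Supp n (rho4b n m) := by
  intro v hv
  rw [rho4b_apply]
  split_ifs <;> omega

lemma rho4b_leftdesc {n m i : ℕ} (hm : n/2 ≤ m) (hm2 : m + 2 ≤ n) (hi : i + 1 < n)
    (h : (rho4b n m)⁻¹ (i+1) < (rho4b n m)⁻¹ i) : i ≠ n/2 - 1 := by
  intro hc
  rw [rho4b_inv_apply, rho4b_inv_apply] at h
  split_ifs at h <;> omega

lemma rho4b_desc_ne {n m i : ℕ} (hm : n/2 ≤ m) (hm2 : m + 2 ≤ n) (hi : i + 1 < n)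
    (hne : i ≠ m) : rho4b n m (i+1) < rho4b n m i := by
  rw [rho4b_apply, rho4b_apply]
  split_ifs <;> omega

lemma rho4b_asc {n m : ℕ} (hm : n/2 ≤ m) (hm2 : m + 2 ≤ n) :
    ∃ i, i + 1 < n ∧ rho4b n m i < rho4b n m (i+1) := by
  refine ⟨m, by omega, ?_⟩
  rw [rho4b_apply, rho4b_apply]
  split_ifs <;> omega

lemma rho4b_descex {n m : ℕ} (hm : n/2 ≤ m) (hm2 : m + 2 ≤ n) (hn : 3 ≤ n) :
    ∃ i, i + 1 < n ∧ rho4b n m (i+1) < rho4b n m i := by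
  by_cases h0 : m = 0
  · exact ⟨1, by omega, rho4b_desc_ne hm hm2 (by omega) (by omega)⟩
  · exact ⟨0, by omega, rho4b_desc_ne hm hm2 (by omega) (by omega)⟩

end ChainPerms
section Assembly
open Equiv Finset

set_option linter.unreachableTactic false
set_option linter.unusedTactic false

lemma vA_desc' {a b i : ℕ} (hab : a < b) (hi : i + 1 = b) : vA a b (i+1) < vA a b i := by
  rw [vA_apply, vA_apply]
  split_ifs <;> omega

lemma vB_desc' {a b i : ℕ} (hab : a < b) (hi : i = a) : vB a b (i+1) < vB a b i := by
  rw [vB_apply, vB_apply]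
  split_ifs <;> omega

lemma sw_leftdesc {a t : ℕ} (h : (sw a)⁻¹ (t+1) < (sw a)⁻¹ t) : t = a := by
  rw [sw_inv_self] at h
  exact sw_desc_iff.mp h

/-- between any two generators there is a two-step path -/
lemma sigma_chain {n : ℕ} (hn : 3 ≤ n) (i j : Fin (n-1)) :
    ∃ v : BraidMonoid n, (v ∈ Simples n ∧ v ≠ 1 ∧ v ≠ garside n)
      ∧ Arrow (gen i) v ∧ Arrow v (gen j) := by
  have hi : i.val + 1 < n := by have := i.2; omega
  have hj : j.val + 1 < n := by have := j.2; omega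
  by_cases hij : i.val ≤ j.val
  · -- use vA i (j+1)
    have hab : i.val < j.val + 1 := by omega
    obtain ⟨x, hxS, hπ⟩ := simple_lift (show 1 ≤ n by omega) (vA i.val (j.val+1))
      (vA_supp (by omega))
    have hvert := vertex_of (show 1 ≤ n by omega) hxS hπ
      ⟨j.val, by omega, vA_desc' hab rfl⟩ (vA_asc hab (by omega) hn)
    refine ⟨x, hvert, ?_, ?_⟩
    · apply arrow_of_desc (by omega) (gen_simple hn i) hxS
      intro t ht hd
      rw [hπ] at hd
      have := vA_leftdesc hab hd
      rw [pib_gen, this]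
      exact sw_desc_iff.mpr rfl
    · apply arrow_of_desc (by omega) hxS (gen_simple hn j)
      intro t ht hd
      rw [pib_gen, sw_inv_self] at hd
      have := sw_desc_iff.mp hd
      rw [hπ, this]
      exact vA_desc' hab rfl
  · -- use vB j (i+1)
    have hab : j.val < i.val + 1 := by omega
    obtain ⟨x, hxS, hπ⟩ := simple_lift (show 1 ≤ n by omega) (vB j.val (i.val+1))
      (vB_supp (by omega))
    have hvert := vertex_of (show 1 ≤ n by omega) hxS hπ
      ⟨j.val, by omega, vB_desc' hab rfl⟩ (vB_asc hab (by omega) hn)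
    refine ⟨x, hvert, ?_, ?_⟩
    · apply arrow_of_desc (by omega) (gen_simple hn i) hxS
      intro t ht hd
      rw [hπ] at hd
      have ht2 := vB_leftdesc hab hd
      have ht3 : t = i.val := by omega
      rw [pib_gen, ht3]
      exact sw_desc_iff.mpr rfl
    · apply arrow_of_desc (by omega) hxS (gen_simple hn j)
      intro t ht hd
      rw [pib_gen, sw_inv_self] at hd
      have := sw_desc_iff.mp hd
      rw [hπ, this]
      exact vB_desc' hab rfl

lemma rho4_pack {n m : ℕ} (hm2 : m + 2 ≤ n) (hn : 3 ≤ n) :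
    ∃ ρ : Equiv.Perm ℕ, Supp n ρ ∧
      (∀ i, i + 1 < n → ρ⁻¹ (i+1) < ρ⁻¹ i → i ≠ n/2 - 1) ∧
      (∀ i, i + 1 < n → i ≠ m → ρ (i+1) < ρ i) ∧
      (∃ i, i + 1 < n ∧ ρ i < ρ (i+1)) ∧ (∃ i, i + 1 < n ∧ ρ (i+1) < ρ i) := by
  by_cases hcase : m < n/2
  · exact ⟨rho4a n m, rho4a_supp,
      fun i h1 h2 => rho4a_leftdesc hcase hm2 h1 h2,
      fun i h1 h2 => rho4a_desc_ne hcase hm2 h1 h2,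
      rho4a_asc hcase hm2, rho4a_descex hcase hm2 hn⟩
  · push_neg at hcase
    exact ⟨rho4b n m, rho4b_supp,
      fun i h1 h2 => rho4b_leftdesc hcase hm2 h1 h2,
      fun i h1 h2 => rho4b_desc_ne hcase hm2 h1 h2,
      rho4b_asc hcase hm2, rho4b_descex hcase hm2 hn⟩

lemma rev_self_inv (n : ℕ) : (rev n)⁻¹ = rev n := Equiv.ext fun _ => rfl

end Assembly
/-- For `n ≥ 3`, the Charney graph of the positive braid monoid,
with vertex set `V = S \ {1, Δ_n}` and edges `x → y`, contains loops at every
generator and is strongly connected. -/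
theorem charney_graph_braid (n : ℕ) (hn : 3 ≤ n) :
    (∀ i : Fin (n - 1),
      gen i ∈ Simples n ∧ gen i ≠ 1 ∧ gen i ≠ garside n ∧ Arrow (gen i) (gen i)) ∧
    (∀ x y : BraidMonoid n,
      x ∈ Simples n → x ≠ 1 → x ≠ garside n →
      y ∈ Simples n → y ≠ 1 → y ≠ garside n →
      Relation.ReflTransGen
        (fun a b => (a ∈ Simples n ∧ a ≠ 1 ∧ a ≠ garside n) ∧
          (b ∈ Simples n ∧ b ≠ 1 ∧ b ≠ garside n) ∧ Arrow a b) x y) := by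
  constructor
  · intro i
    obtain ⟨h1, h2, h3⟩ := gen_vertex hn i
    exact ⟨h1, h2, h3, gen_arrow_self hn i⟩
  · intro x y hxS hx1 hxG hyS hy1 hyG
    have hn1 : 1 ≤ n := by omega
    -- a descent of x
    have hπx1 : pib n x ≠ 1 := pib_ne_one hn1 hxS hx1
    obtain ⟨i₀, hi₀n, hi₀d⟩ := exists_desc (supp_pib x) hπx1
    have hi₀f : i₀ < n - 1 := by omega
    -- an index which is not a left descent of y
    have hπyG : pib n y ≠ rev n := pib_ne_rev hn1 hyS hyG
    have hτ : (pib n y)⁻¹ ≠ rev n := by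
      intro hc
      apply hπyG
      have h2 := congrArg (fun σ : Equiv.Perm ℕ => σ⁻¹) hc
      simp only [inv_inv, rev_self_inv] at h2
      exact h2
    obtain ⟨m, hmn, hmasc⟩ := exists_asc (supp_inv (supp_pib y)) hτ
    -- the intermediate vertices
    have hr1 : n - n/2 - 1 < n - 1 := by omega
    obtain ⟨vH, hvHvert, hvHa1, hvHa2⟩ := sigma_chain hn ⟨i₀, hi₀f⟩ ⟨n - n/2 - 1, hr1⟩
    obtain ⟨W2, hW2S, hπ2⟩ := simple_lift hn1 (rho2 n) rho2_supp
    have hW2vert := vertex_of hn1 hW2S hπ2 (rho2_desc hn) (rho2_asc hn)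
    obtain ⟨W3, hW3S, hπ3⟩ := simple_lift hn1 (rho3 n) rho3_supp
    have hW3vert := vertex_of hn1 hW3S hπ3 (rho3_descex hn) (rho3_asc hn)
    obtain ⟨ρ4, hρ4supp, hρ4L, hρ4D, hρ4asc, hρ4desc⟩ :=
      rho4_pack (show m + 2 ≤ n by omega) hn
    obtain ⟨W4, hW4S, hπ4⟩ := simple_lift hn1 ρ4 hρ4supp
    have hW4vert := vertex_of hn1 hW4S hπ4 hρ4desc hρ4asc
    -- the arrows
    have A1 : Arrow x (gen ⟨i₀, hi₀f⟩) := by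
      apply arrow_of_desc hn1 hxS (gen_simple hn _)
      intro t ht hd
      rw [pib_gen] at hd
      have he := sw_leftdesc hd
      rw [he]
      exact hi₀d
    have A4 : Arrow (gen ⟨n - n/2 - 1, hr1⟩) W2 := by
      apply arrow_of_desc hn1 (gen_simple hn _) hW2S
      intro t ht hd
      rw [hπ2] at hd
      have he := rho2_leftdesc hn ht hd
      rw [pib_gen, he]
      exact sw_desc_iff.mpr rfl
    have A5 : Arrow W2 W3 := by
      apply arrow_of_desc hn1 hW2S hW3S
      intro t ht hd
      rw [hπ3] at hd
      have hev := rho3_leftdesc ht hd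
      rw [hπ2]
      exact rho2_desc_even hev ht
    have A6 : Arrow W3 W4 := by
      apply arrow_of_desc hn1 hW3S hW4S
      intro t ht hd
      rw [hπ4] at hd
      have hne := hρ4L t ht hd
      rw [hπ3]
      exact rho3_desc_ne ht hne
    have A7 : Arrow W4 y := by
      apply arrow_of_desc hn1 hW4S hyS
      intro t ht hd
      have htm : t ≠ m := by
        intro hc
        rw [hc] at hd
        omega
      rw [hπ4]
      exact hρ4D t ht htm
    -- assemble the chain
    refine Relation.ReflTransGen.head ⟨⟨hxS, hx1, hxG⟩, gen_vertex hn _, A1⟩ ?_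
    refine Relation.ReflTransGen.head ⟨gen_vertex hn _, hvHvert, hvHa1⟩ ?_
    refine Relation.ReflTransGen.head ⟨hvHvert, gen_vertex hn _, hvHa2⟩ ?_
    refine Relation.ReflTransGen.head ⟨gen_vertex hn _, hW2vert, A4⟩ ?_
    refine Relation.ReflTransGen.head ⟨hW2vert, hW3vert, A5⟩ ?_
    refine Relation.ReflTransGen.head ⟨hW3vert, hW4vert, A6⟩ ?_
    exact Relation.ReflTransGen.single ⟨hW4vert, ⟨hyS, hy1, hyG⟩, A7⟩

end BraidMeasure
end

section
/- Let n ≥ 3. The Möbius polynomial H*_n of the dual braid monoid has a real root q with 0 < q < 1 such that q is a simple root of H*_n (root multiplicity 1) and every complex root z of H*_n with z ≠ q satisfies |z| > q. In particular, H*_n has a unique complex root of smallest modulus, and this root is real, simple, and lies in (0,1). -/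
open scoped Classical

namespace BraidMeasure

/-- Index type for the Birman–Ko–Lee generators `σ_{i,j}`, `1 ≤ i < j ≤ n`. -/
def DualGen (n : ℕ) : Type := {p : Fin n × Fin n // p.1 < p.2}

/-- Defining relations of the dual braid monoid `Br*_n`. -/
inductive DualRel (n : ℕ) :
    FreeMonoid (DualGen n) → FreeMonoid (DualGen n) → Prop
  | tri1 (i j k : Fin n) (hij : i < j) (hjk : j < k) :
      DualRel n (FreeMonoid.of ⟨(i, j), hij⟩ * FreeMonoid.of ⟨(j, k), hjk⟩)
        (FreeMonoid.of ⟨(j, k), hjk⟩ * FreeMonoid.of ⟨(i, k), hij.trans hjk⟩)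
  | tri2 (i j k : Fin n) (hij : i < j) (hjk : j < k) :
      DualRel n (FreeMonoid.of ⟨(j, k), hjk⟩ * FreeMonoid.of ⟨(i, k), hij.trans hjk⟩)
        (FreeMonoid.of ⟨(i, k), hij.trans hjk⟩ * FreeMonoid.of ⟨(i, j), hij⟩)
  | comm1 (i j k l : Fin n) (hij : i < j) (hjk : j < k) (hkl : k < l) :
      DualRel n (FreeMonoid.of ⟨(i, j), hij⟩ * FreeMonoid.of ⟨(k, l), hkl⟩)
        (FreeMonoid.of ⟨(k, l), hkl⟩ * FreeMonoid.of ⟨(i, j), hij⟩)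
  | comm2 (i k l j : Fin n) (hik : i < k) (hkl : k < l) (hlj : l < j) :
      DualRel n
        (FreeMonoid.of ⟨(i, j), hik.trans (hkl.trans hlj)⟩ * FreeMonoid.of ⟨(k, l), hkl⟩)
        (FreeMonoid.of ⟨(k, l), hkl⟩ * FreeMonoid.of ⟨(i, j), hik.trans (hkl.trans hlj)⟩)

/-- The dual braid monoid `Br*_n` (Birman–Ko–Lee). -/
def DualBraidMonoid (n : ℕ) : Type := (conGen (DualRel n)).Quotient

instance (n : ℕ) : Monoid (DualBraidMonoid n) :=
  inferInstanceAs (Monoid (conGen (DualRel n)).Quotient)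

/-- The Birman–Ko–Lee generator `σ_{i,j}`. -/
def genD {n : ℕ} (g : DualGen n) : DualBraidMonoid n :=
  (conGen (DualRel n)).mk' (FreeMonoid.of g)

/-- Left divisibility in `Br*_n`. -/
def ldvdD {n : ℕ} (x y : DualBraidMonoid n) : Prop := ∃ z, y = x * z

/-- `σ_{i+1,i+2}` for a natural number index, with junk value `1` out of range. -/
def genD' {n : ℕ} (i : ℕ) : DualBraidMonoid n :=
  if h : i + 1 < n then
    genD ⟨(⟨i, Nat.lt_of_succ_lt h⟩, ⟨i + 1, h⟩), Fin.mk_lt_mk.mpr (Nat.lt_succ_self i)⟩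
  else 1

/-- The Garside element `δ_n = σ_{1,2} σ_{2,3} ⋯ σ_{n-1,n}` of the dual braid monoid. -/
def garsideD (n : ℕ) : DualBraidMonoid n :=
  ((List.range (n - 1)).map fun i => (genD' i : DualBraidMonoid n)).prod

/-- The set of simple dual braids: left divisors of `δ_n`. -/
def SimplesD (n : ℕ) : Set (DualBraidMonoid n) := {x | ldvdD x (garsideD n)}

/-- `L(y) = {σ_{i,j} : σ_{i,j} ≤_l y}`. -/
def LsetD {n : ℕ} (y : DualBraidMonoid n) : Set (DualGen n) := {g | ldvdD (genD g) y}

/-- `R(x) = {σ_{i,j} : x · σ_{i,j} ∉ S}`. -/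
def RsetD {n : ℕ} (x : DualBraidMonoid n) : Set (DualGen n) :=
  {g | x * genD g ∉ SimplesD n}

/-- The relation `x → y` between simple dual braids: `L(y) ⊆ R(x)`. -/
def ArrowD {n : ℕ} (x y : DualBraidMonoid n) : Prop := LsetD y ⊆ RsetD x

/-- The Möbius polynomial of the dual braid monoid:
`H*_n(t) = ∑_{k=0}^{n-1} (-1)^k ((n-1+k)! / ((n-1-k)!·k!·(k+1)!)) t^k`. -/
noncomputable def mobiusHdual (n : ℕ) : Polynomial ℤ :=
  ∑ k ∈ Finset.range n,
    Polynomial.C ((-1 : ℤ) ^ k *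
      (((n - 1 + k).factorial / ((n - 1 - k).factorial * k.factorial * (k + 1).factorial) : ℕ) : ℤ))
      * Polynomial.X ^ k


open Polynomial Finset Nat

lemma cat_fact (j : ℕ) : catalan j * ((j+1).factorial * j.factorial) = (2*j).factorial := by
  have h := Nat.choose_mul_factorial_mul_factorial (show j ≤ 2*j by omega)
  rw [show 2*j - j = j by omega] at h
  have h3 := succ_mul_catalan_eq_centralBinom j
  have h4 : Nat.centralBinom j = (2*j).choose j := rfl
  calc catalan j * ((j+1).factorial * j.factorial)
      = ((j+1) * catalan j) * (j.factorial * j.factorial) := by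
        rw [Nat.factorial_succ]; ring
    _ = (2*j).choose j * j.factorial * j.factorial := by rw [h3, h4]; ring
    _ = (2*j).factorial := h

lemma fact_eq (m j : ℕ) (hj : j ≤ m) :
    (m + j).factorial = ((m+j).choose (2*j) * catalan j) *
      ((m - j).factorial * j.factorial * (j+1).factorial) := by
  have h := Nat.choose_mul_factorial_mul_factorial (show 2*j ≤ m+j by omega)
  rw [show m + j - 2*j = m - j by omega] at h
  rw [← h, ← cat_fact j]; ring

lemma div_eq (m j : ℕ) (hj : j ≤ m) :
    (m + j).factorial / ((m - j).factorial * j.factorial * (j+1).factorial)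
      = (m+j).choose (2*j) * catalan j := by
  rw [fact_eq m j hj]
  exact Nat.mul_div_cancel _
    (Nat.mul_pos (Nat.mul_pos (Nat.factorial_pos _) (Nat.factorial_pos _)) (Nat.factorial_pos _))

lemma key_nat (m j : ℕ) (hm : 1 ≤ m) (hj : j ≤ m) :
    m.choose j * (m + j).descFactorial (m - 1)
      = m.factorial * ((m+j).choose (2*j) * catalan j) := by
  have hd : (j+1).factorial * (m+j).descFactorial (m-1) = (m+j).factorial := by
    have h := Nat.factorial_mul_descFactorial (show m - 1 ≤ m + j by omega)
    rwa [show m + j - (m-1) = j+1 by omega] at h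
  have hc := Nat.choose_mul_factorial_mul_factorial hj
  apply Nat.eq_of_mul_eq_mul_right
    (show 0 < (j+1).factorial * (j.factorial * (m-j).factorial) from
      Nat.mul_pos (Nat.factorial_pos _) (Nat.mul_pos (Nat.factorial_pos _) (Nat.factorial_pos _)))
  calc m.choose j * (m + j).descFactorial (m - 1) *
        ((j+1).factorial * (j.factorial * (m-j).factorial))
      = (m.choose j * j.factorial * (m-j).factorial) *
          ((j+1).factorial * (m+j).descFactorial (m-1)) := by ring
    _ = m.factorial * (m+j).factorial := by rw [hc, hd]
    _ = m.factorial * ((m+j).choose (2*j) * catalan j) *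
          ((j+1).factorial * (j.factorial * (m-j).factorial)) := by
        rw [fact_eq m j hj]; ring

lemma mobius_eq (m : ℕ) : mobiusHdual (m+1)
    = ∑ k ∈ range (m+1), C ((-1:ℤ)^k * (((m+k).choose (2*k) * catalan k : ℕ) : ℤ)) * X^k := by
  unfold mobiusHdual
  refine sum_congr rfl fun k hk => ?_
  rw [mem_range] at hk
  rw [show m + 1 - 1 = m from rfl, div_eq m k (by omega)]

lemma expandP (m : ℕ) : ((X : ℤ[X]) - X^2)^m
    = ∑ j ∈ range (m+1), C ((-1:ℤ)^j * (m.choose j : ℤ)) * X^(m+j) := by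
  rw [sub_pow, ← Finset.sum_range_reflect]
  refine sum_congr rfl fun j hj => ?_
  rw [mem_range] at hj
  have hj' : j ≤ m := by omega
  rw [show m + 1 - 1 - j = m - j by omega]
  rw [Nat.choose_symm hj', show m - (m-j) = j by omega]
  have hp : (-1:ℤ[X])^(m-j+m) = (-1)^j := by
    rw [show m - j + m = j + 2*(m-j) by omega, pow_add, pow_mul]; simp
  rw [hp]
  have e1 : (X:ℤ[X])^(m-j) * ((X:ℤ[X])^2)^j = X^(m+j) := by
    rw [← pow_mul, ← pow_add]; congr 1; omega
  simp only [map_mul, map_pow, map_neg, map_one, C_eq_natCast]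
  rw [← e1]; ring

lemma poly_id (m : ℕ) (hm : 1 ≤ m) :
    derivative^[m-1] (((X : ℤ[X]) - X^2)^m)
      = C (m.factorial : ℤ) * (X * mobiusHdual (m+1)) := by
  rw [expandP, iterate_derivative_sum, mobius_eq]
  simp only [Finset.mul_sum]
  refine sum_congr rfl fun j hj => ?_
  rw [mem_range] at hj
  have hj' : j ≤ m := by omega
  rw [iterate_derivative_C_mul, iterate_derivative_X_pow_eq_C_mul,
      show m + j - (m-1) = j + 1 by omega]
  have hkz : ((m.choose j : ℤ)) * ((m+j).descFactorial (m-1) : ℤ)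
      = (m.factorial : ℤ) * (((m+j).choose (2*j) * catalan j : ℕ) : ℤ) := by
    exact_mod_cast congrArg (fun x : ℕ => (x : ℤ)) (key_nat m j hm hj')
  have key : ((-1:ℤ)^j * (m.choose j)) * ((m+j).descFactorial (m-1) : ℤ)
      = (m.factorial : ℤ) * ((-1)^j * (((m+j).choose (2*j) * catalan j : ℕ) : ℤ)) := by
    linear_combination ((-1:ℤ)^j) * hkz
  calc C ((-1:ℤ)^j * (m.choose j : ℤ)) * (C (((m+j).descFactorial (m-1) : ℤ)) * X^(j+1))
      = C (((-1:ℤ)^j * (m.choose j)) * ((m+j).descFactorial (m-1) : ℤ)) * X^(j+1) := by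
        simp only [map_mul, map_pow, map_neg, map_one]; ring
    _ = C ((m.factorial : ℤ) * ((-1)^j * (((m+j).choose (2*j) * catalan j : ℕ) : ℤ))) * X^(j+1) := by
        rw [key]
    _ = C (m.factorial : ℤ) *
          (X * (C ((-1:ℤ)^j * (((m+j).choose (2*j) * catalan j : ℕ) : ℤ)) * X^j)) := by
        simp only [map_mul, map_pow, map_neg, map_one]; ring

lemma rolle_main (m : ℕ) (hm : 2 ≤ m) : ∀ k, k ≤ m - 1 →
    ∃ (g : ℝ[X]) (a : ℕ → ℝ), a 0 = 0 ∧ a (k+1) = 1 ∧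
      (∀ i j, i < j → j ≤ k+1 → a i < a j) ∧
      derivative^[k] (((X:ℝ[X]) - X^2)^m) = X^(m-k) * (1-X)^(m-k) * g ∧
      (∀ i ≤ k+1, (derivative^[k] (((X:ℝ[X]) - X^2)^m)).eval (a i) = 0) := by
  intro k
  induction k with
  | zero =>
    intro _
    refine ⟨1, fun i => if i = 0 then 0 else 1, by simp, by simp, ?_, ?_, ?_⟩
    · intro i j hij hj
      interval_cases j
      · omega
      · simp [show i = 0 by omega]
    · simp only [Function.iterate_zero, id, Nat.sub_zero, mul_one, ← mul_pow]
      congr 1; ring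
    · intro i hi
      have hfac : ((X:ℝ[X]) - X^2)^m = X^m * (1-X)^m := by
        rw [← mul_pow]; congr 1; ring
      have hm0 : m ≠ 0 := by omega
      interval_cases i <;>
        simp [hfac, eval_mul, eval_pow, zero_pow hm0]
  | succ k ih =>
    intro hk1
    obtain ⟨g, a, ha0, ha1, hmono, hfac, hroot⟩ := ih (by omega)
    set p := derivative^[k] (((X:ℝ[X]) - X^2)^m) with hp
    have hb : m - k = (m - (k+1)) + 1 := by omega
    set b := m - (k+1) with hbdef
    have hbne : b ≠ 0 := by omega
    rw [hb] at hfac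
    have hder : derivative^[k+1] (((X:ℝ[X]) - X^2)^m)
        = X^b * (1-X)^b *
          (C ((b:ℝ)+1) * ((1-X)*g - X*g) + X*(1-X)*derivative g) := by
      rw [Function.iterate_succ_apply', ← hp, hfac]
      simp only [derivative_mul, derivative_pow, derivative_X, derivative_sub,
        derivative_one, Nat.add_sub_cancel]
      push_cast
      ring
    have H : ∀ i : ℕ, ∃ c : ℝ, i ≤ k →
        c ∈ Set.Ioo (a i) (a (i+1)) ∧ eval c (derivative p) = 0 := by
      intro i
      by_cases hi : i ≤ k
      · have hab : a i < a (i+1) := hmono i (i+1) (by omega) (by omega)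
        have h1 : eval (a i) p = 0 := hroot i (by omega)
        have h2 : eval (a (i+1)) p = 0 := hroot (i+1) (by omega)
        obtain ⟨c, hc, hc0⟩ := exists_deriv_eq_zero hab
          ((Polynomial.continuous p).continuousOn) (by rw [h1, h2])
        exact ⟨c, fun _ => ⟨hc, by rw [← Polynomial.deriv]; exact hc0⟩⟩
      · exact ⟨0, fun h => absurd h hi⟩
    choose c hc using H
    have haLB : ∀ i ≤ k+1, 0 ≤ a i := by
      intro i hi
      rcases Nat.eq_zero_or_pos i with h|h
      · simp [h, ha0]
      · exact le_of_lt (ha0 ▸ hmono 0 i h hi)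
    have haUB : ∀ i ≤ k+1, a i ≤ 1 := by
      intro i hi
      rcases Nat.lt_or_ge i (k+1) with h|h
      · exact le_of_lt (ha1 ▸ hmono i (k+1) h (le_refl _))
      · have : i = k+1 := by omega
        simp [this, ha1]
    have hc1 : ∀ i ≤ k, a i < c i ∧ c i < a (i+1) ∧ 0 < c i ∧ c i < 1 := by
      intro i hi
      obtain ⟨⟨l, r⟩, _⟩ := hc i hi
      exact ⟨l, r, lt_of_le_of_lt (haLB i (by omega)) l,
        lt_of_lt_of_le r (haUB (i+1) (by omega))⟩
    refine ⟨_, fun i => if i = 0 then 0 else if i ≤ k+1 then c (i-1) else 1,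
      by simp, by simp, ?_, hder, ?_⟩
    · intro i j hij hj
      have hj2 : j ≤ k+2 := hj
      dsimp only
      split_ifs with h1 h2 h3 h4 h5
      all_goals try omega
      · exact (hc1 (j-1) (by omega)).2.2.1
      · exact zero_lt_one
      · have hi1 : i - 1 ≤ k := by omega
        have hj1 : j - 1 ≤ k := by omega
        have e1 : c (i-1) < a i := by
          have := (hc1 (i-1) hi1).2.1
          rwa [show i - 1 + 1 = i by omega] at this
        have e2 : a (j-1) < c (j-1) := (hc1 (j-1) hj1).1
        have e3 : a i ≤ a (j-1) := by
          rcases Nat.lt_or_ge i (j-1) with h|h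
          · exact le_of_lt (hmono i (j-1) h (by omega))
          · have : i = j - 1 := by omega
            simp [this]
        linarith
      · exact (hc1 (i-1) (by omega)).2.2.2
    · intro i hi
      dsimp only
      rw [hder]
      rcases Nat.eq_zero_or_pos i with h0|h0
      · simp [h0, eval_mul, eval_pow, zero_pow hbne]
      rcases Nat.lt_or_ge i (k+2) with hlt|hge
      · have hik : i - 1 ≤ k := by omega
        obtain ⟨_, hz⟩ := hc (i-1) hik
        have heq : (if i = 0 then (0:ℝ) else if i ≤ k+1 then c (i-1) else 1) = c (i-1) := by
          split_ifs <;> first | omega | rfl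
        rw [heq, ← hder, Function.iterate_succ_apply', ← hp]
        exact hz
      · have : i = k+2 := by omega
        simp [this, eval_mul, eval_pow, zero_pow hbne]

/-- For `n ≥ 3`, the Möbius polynomial `H*_n` of the dual braid
monoid has a unique root of smallest modulus; this root is real, simple and lies
in `(0,1)`. -/
theorem mobiusHdual_unique_smallest_root (n : ℕ) (hn : 3 ≤ n) :
    ∃ q : ℝ, 0 < q ∧ q < 1 ∧
      Polynomial.aeval q (mobiusHdual n) = 0 ∧
      Polynomial.rootMultiplicity (q : ℂ) ((mobiusHdual n).map (algebraMap ℤ ℂ)) = 1 ∧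
      ∀ z : ℂ, Polynomial.aeval z (mobiusHdual n) = 0 → z ≠ (q : ℂ) → q < ‖z‖ := by
  obtain ⟨m, rfl⟩ : ∃ m, n = m + 1 := ⟨n - 1, by omega⟩
  have hm : 2 ≤ m := by omega
  set Hz := mobiusHdual (m+1) with hHz
  set Hr : ℝ[X] := Hz.map (algebraMap ℤ ℝ) with hHr
  set Hc : ℂ[X] := Hz.map (algebraMap ℤ ℂ) with hHc
  -- the identity over ℝ
  have hid : derivative^[m-1] (((X:ℝ[X]) - X^2)^m) = C ((m.factorial : ℝ)) * (X * Hr) := by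
    have h1 : (((X:ℝ[X]) - X^2)^m) = (((X:ℤ[X]) - X^2)^m).map (algebraMap ℤ ℝ) := by
      simp [Polynomial.map_pow, Polynomial.map_sub, Polynomial.map_X]
    rw [h1, iterate_derivative_map, poly_id m (by omega)]
    simp [Polynomial.map_mul, Polynomial.map_C, Polynomial.map_X, hHr]
    exact Or.inl rfl
  obtain ⟨g, a, ha0, ha1, hmono, _, hroot⟩ := rolle_main m hm (m-1) (le_refl _)
  have hm1 : m - 1 + 1 = m := by omega
  rw [hm1] at ha1 hmono hroot
  have hapos : ∀ i, 1 ≤ i → i ≤ m → 0 < a i := fun i h1 h2 => ha0 ▸ hmono 0 i h1 h2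
  -- roots of Hr
  have hroots : ∀ i, 1 ≤ i → i ≤ m → eval (a i) Hr = 0 := by
    intro i h1 h2
    have h := hroot i h2
    rw [hid] at h
    simp only [eval_mul, eval_C, eval_X] at h
    have hfa : (m.factorial : ℝ) ≠ 0 := Nat.cast_ne_zero.mpr (Nat.factorial_ne_zero m)
    have hai : a i ≠ 0 := ne_of_gt (hapos i h1 h2)
    rcases _root_.mul_eq_zero.mp h with h' | h'
    · exact absurd h' hfa
    rcases _root_.mul_eq_zero.mp h' with h'' | h''
    · exact absurd h'' hai
    · exact h''
  -- degree and nonvanishing facts over ℂ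
  have hcoeff : Hz.coeff m = (-1)^m * (catalan m : ℤ) := by
    rw [hHz, mobius_eq, finset_sum_coeff]
    simp only [coeff_C_mul, coeff_X_pow, mul_ite, mul_one, mul_zero]
    rw [Finset.sum_ite_eq (range (m+1)) m]
    simp [show m + m = 2*m by ring, Nat.choose_self]
  have hHcm : Hc.coeff m ≠ 0 := by
    have hcat : catalan m ≠ 0 := by
      intro h
      have hcb := succ_mul_catalan_eq_centralBinom m
      rw [h, Nat.mul_zero] at hcb
      exact (Nat.centralBinom_pos m).ne hcb
    have hz0 : ((-1:ℤ)^m * (catalan m : ℤ)) ≠ 0 := by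
      apply mul_ne_zero (pow_ne_zero _ (by norm_num))
      exact_mod_cast hcat
    rw [hHc, coeff_map, hcoeff]
    exact fun h => hz0 (by exact_mod_cast (Int.cast_injective (α := ℂ)) (by simpa using h))
  have hHcne : Hc ≠ 0 := fun h => hHcm (by simp [h])
  have hdegz : Hz.natDegree ≤ m := by
    rw [hHz, mobius_eq]
    apply Polynomial.natDegree_sum_le_of_forall_le
    intro k hk
    rw [mem_range] at hk
    exact le_trans (natDegree_C_mul_le _ _) (by rw [natDegree_X_pow]; omega)
  have hcard : Multiset.card Hc.roots ≤ m :=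
    le_trans (card_roots' Hc) (le_trans natDegree_map_le hdegz)
  -- transfer real roots to ℂ
  have hmapRC : Hc = Hr.map (algebraMap ℝ ℂ) := by
    have he : (algebraMap ℤ ℂ) = (algebraMap ℝ ℂ).comp (algebraMap ℤ ℝ) :=
      Subsingleton.elim _ _
    rw [hHr, hHc, Polynomial.map_map, ← he]
  have hRC : ∀ x : ℝ, eval x Hr = 0 → eval (x:ℂ) Hc = 0 := by
    intro x hx
    rw [hmapRC, eval_map, show ((x:ℂ)) = algebraMap ℝ ℂ x from rfl, eval₂_at_apply, hx, map_zero]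
  -- the finset of the m roots in ℂ
  set T : Finset ℂ := (range m).image (fun i => ((a (i+1) : ℝ) : ℂ)) with hT
  have haNe : ∀ i j, i < m → j < m → i ≠ j → a (i+1) ≠ a (j+1) := by
    intro i j hi hj hij
    rcases Nat.lt_or_ge i j with h|h
    · exact ne_of_lt (hmono (i+1) (j+1) (by omega) (by omega))
    · exact (ne_of_lt (hmono (j+1) (i+1) (by omega) (by omega))).symm
  have hinj : Set.InjOn (fun i => ((a (i+1) : ℝ) : ℂ)) (range m) := by
    intro i hi j hj he
    by_contra hne
    exact haNe i j (mem_range.mp hi) (mem_range.mp hj) hne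
      (Complex.ofReal_injective he)
  have hTcard : T.card = m := by rw [hT, Finset.card_image_of_injOn hinj, card_range]
  have hle : T.val ≤ Hc.roots := by
    rw [Multiset.le_iff_count]
    intro z
    by_cases hz : z ∈ T
    · rw [Multiset.count_eq_one_of_mem T.nodup hz, count_roots]
      obtain ⟨i, hi, rfl⟩ := Finset.mem_image.mp hz
      rw [mem_range] at hi
      exact (rootMultiplicity_pos hHcne).mpr (hRC _ (hroots (i+1) (by omega) (by omega)))
    · rw [Multiset.count_eq_zero.mpr hz]
      exact Nat.zero_le _
  have heq : Hc.roots = T.val := by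
    refine (Multiset.eq_of_le_of_card_le hle ?_).symm
    rw [show Multiset.card T.val = T.card from rfl, hTcard]
    exact hcard
  -- q is the smallest root
  have hq1m : a 1 < 1 := ha1 ▸ hmono 1 m (by omega) (le_refl m)
  have hqT : ((a 1 : ℝ) : ℂ) ∈ T := by
    rw [hT]
    exact Finset.mem_image.mpr ⟨0, mem_range.mpr (by omega), rfl⟩
  refine ⟨a 1, hapos 1 (le_refl 1) (by omega), hq1m, ?_, ?_, ?_⟩
  · rw [Polynomial.aeval_def, ← eval_map]
    exact hroots 1 (le_refl 1) (by omega)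
  · rw [← count_roots, heq, Multiset.count_eq_one_of_mem T.nodup hqT]
  · intro z hz hne
    have hzr : z ∈ Hc.roots := by
      rw [mem_roots hHcne]
      rw [Polynomial.aeval_def, ← eval_map] at hz
      exact hz
    rw [heq] at hzr
    obtain ⟨i, hi, rfl⟩ := Finset.mem_image.mp (Finset.mem_def.mpr hzr)
    rw [mem_range] at hi
    have hine : i + 1 ≠ 1 := by
      intro h
      exact hne (by rw [show i = 0 by omega])
    have hlt : a 1 < a (i+1) := hmono 1 (i+1) (by omega) (by omega)
    have : ‖((a (i+1) : ℝ) : ℂ)‖ = a (i+1) := by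
      rw [Complex.norm_real, Real.norm_eq_abs, abs_of_pos (hapos (i+1) (by omega) (by omega))]
    rw [this]
    exact hlt


end BraidMeasure
end

section
/- Let f, h : Br_n → ℝ. Then the following are equivalent: (i) for every x ∈ S, f(x) = Σ_{y ∈ Br_n, x·y ∈ S} h(x·y) (a finite sum, the set S of simple braids being finite); (ii) for every x ∈ S, h(x) = Σ_{X ⊆ Σ with x·Δ̂(X) ∈ S} (−1)^{|X|} f(x·Δ̂(X)). -/
open scoped Classical

namespace BraidMeasure

variable {n : ℕ}

def far (i j : Fin (n-1)) : Prop := (i:ℕ)+2 ≤ (j:ℕ) ∨ (j:ℕ)+2 ≤ (i:ℕ)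
def adj (i j : Fin (n-1)) : Prop := (i:ℕ)+1 = (j:ℕ) ∨ (j:ℕ)+1 = (i:ℕ)
instance (i j : Fin (n-1)) : Decidable (far i j) := by unfold far; infer_instance
instance (i j : Fin (n-1)) : Decidable (adj i j) := by unfold adj; infer_instance
lemma far.symm {i j : Fin (n-1)} (h : far i j) : far j i := Or.symm h
lemma adj.symm {i j : Fin (n-1)} (h : adj i j) : adj j i := Or.symm h
lemma far_or_adj {i j : Fin (n-1)} (h : i ≠ j) : far i j ∨ adj i j := by
  have := Fin.val_ne_of_ne h
  unfold far adj; omega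
lemma far.ne {i j : Fin (n-1)} (h : far i j) : i ≠ j := by
  rintro rfl; unfold far at h; omega
lemma adj.ne {i j : Fin (n-1)} (h : adj i j) : i ≠ j := by
  rintro rfl; unfold adj at h; omega
lemma adj.not_far {i j : Fin (n-1)} (h : adj i j) : ¬ far i j := by
  unfold far adj at *; omega
lemma far_of_adj_adj {i j p : Fin (n-1)} (h1 : adj p i) (h2 : adj p j) (h : i ≠ j) : far i j := by
  have := Fin.val_ne_of_ne h
  unfold far adj at *; omega

inductive Step : List (Fin (n-1)) → List (Fin (n-1)) → Prop
  | comm {i j : Fin (n-1)} (t) (h : far i j) : Step (i::j::t) (j::i::t)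
  | braid {i j : Fin (n-1)} (t) (h : adj i j) : Step (i::j::i::t) (j::i::j::t)
  | cons (a) {u v} : Step u v → Step (a::u) (a::v)

def R : List (Fin (n-1)) → List (Fin (n-1)) → Prop := Relation.ReflTransGen Step

lemma Step.symm' {u v : List (Fin (n-1))} (h : Step u v) : Step v u := by
  induction h with
  | comm t h => exact .comm t h.symm
  | braid t h => exact .braid t h.symm
  | cons a _ ih => exact .cons a ih
lemma R.refl {u : List (Fin (n-1))} : R u u := Relation.ReflTransGen.refl
lemma R.single {u v : List (Fin (n-1))} (h : Step u v) : R u v := Relation.ReflTransGen.single h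
lemma R.trans {u v w : List (Fin (n-1))} (h : R u v) (h' : R v w) : R u w :=
  Relation.ReflTransGen.trans h h'
lemma R.symm {u v : List (Fin (n-1))} (h : R u v) : R v u := by
  induction h with
  | refl => exact .refl
  | tail _ h2 ih => exact R.trans (.single h2.symm') ih
lemma Step.length {u v : List (Fin (n-1))} (h : Step u v) : u.length = v.length := by
  induction h with
  | comm t h => rfl
  | braid t h => rfl
  | cons a _ ih => simpa using ih
lemma R.length {u v : List (Fin (n-1))} (h : R u v) : u.length = v.length := by
  induction h with
  | refl => rfl
  | tail _ h2 ih => exact ih.trans h2.length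
lemma R.cons (a : Fin (n-1)) {u v : List (Fin (n-1))} (h : R u v) : R (a::u) (a::v) := by
  induction h with
  | refl => exact .refl
  | tail _ h2 ih => exact ih.trans (.single (.cons a h2))
lemma R.appendLeft (w : List (Fin (n-1))) {u v : List (Fin (n-1))} (h : R u v) :
    R (w ++ u) (w ++ v) := by
  induction w with
  | nil => exact h
  | cons a w ih => exact ih.cons a
lemma Step.appendRight {u v : List (Fin (n-1))} (w : List (Fin (n-1))) (h : Step u v) :
    Step (u ++ w) (v ++ w) := by
  induction h with
  | comm t h => exact .comm _ h
  | braid t h => exact .braid _ h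
  | cons a _ ih => exact .cons a ih
lemma R.appendRight (w : List (Fin (n-1))) {u v : List (Fin (n-1))} (h : R u v) :
    R (u ++ w) (v ++ w) := by
  induction h with
  | refl => exact .refl
  | tail _ h2 ih => exact ih.trans (.single (h2.appendRight w))
lemma R.append {u v u' v' : List (Fin (n-1))} (h : R u v) (h' : R u' v') :
    R (u ++ u') (v ++ v') := (h.appendRight u').trans (R.appendLeft v h')
lemma Step.reverse {u v : List (Fin (n-1))} (h : Step u v) : R u.reverse v.reverse := by
  induction h with
  | @comm i j t h =>
    simp only [List.reverse_cons, List.append_assoc, List.singleton_append]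
    exact R.appendLeft _ (R.single (.comm [] h.symm))
  | @braid i j t h =>
    simp only [List.reverse_cons, List.append_assoc, List.singleton_append]
    exact R.appendLeft _ (R.single (.braid [] h))
  | cons a _ ih =>
    simp only [List.reverse_cons]
    exact ih.appendRight _
lemma R.reverse {u v : List (Fin (n-1))} (h : R u v) : R u.reverse v.reverse := by
  induction h with
  | refl => exact .refl
  | tail _ h2 ih => exact ih.trans h2.reverse

/-- the complement word: `i :: W i j ≡ j :: W j i` is the lcm of `i, j`. -/
def W (i j : Fin (n-1)) : List (Fin (n-1)) := if far i j then [j] else [j, i]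

lemma W_far {i j : Fin (n-1)} (h : far i j) : W i j = [j] := if_pos h
lemma W_adj {i j : Fin (n-1)} (h : adj i j) : W i j = [j, i] := if_neg h.not_far

def Concl (i : Fin (n-1)) (u : List (Fin (n-1))) (j : Fin (n-1)) (v : List (Fin (n-1))) : Prop :=
  (i = j → R u v) ∧ (i ≠ j → ∃ w, R u (W i j ++ w) ∧ R v (W j i ++ w))

section Crux
variable {L : ℕ}
  (K : ∀ {u v : List (Fin (n-1))} {i j : Fin (n-1)}, u.length < L → R (i::u) (j::v) →
    Concl i u j v)

include K in
lemma crux_aux {i j p : Fin (n-1)} {t c : List (Fin (n-1))} (hij : i ≠ j) (hpi : p ≠ i)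
    (hpj : p ≠ j) (hconf : far p i)
    (hlen : (W p i ++ t).length ≤ L) (H : R (W p i ++ t) (W p j ++ c)) :
    ∃ w, R (W i p ++ t) (W i j ++ w) ∧ R (W j p ++ c) (W j i ++ w) := by
  have Kne : ∀ {a b : Fin (n-1)} {s s' : List (Fin (n-1))}, a ≠ b → s.length < L →
      R (a::s) (b::s') → ∃ w, R s (W a b ++ w) ∧ R s' (W b a ++ w) :=
    fun hne hl h => (K hl h).2 hne
  rw [W_far hconf] at hlen H
  rw [W_far hconf.symm]
  simp only [List.singleton_append, List.length_cons] at hlen H ⊢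
  rcases far_or_adj hpj with hfpj | hapj
  · -- p far from both i and j
    rw [W_far hfpj] at H
    rw [W_far hfpj.symm]
    have hHlen := H.length
    simp only [List.singleton_append, List.length_cons] at H hHlen ⊢
    obtain ⟨d, hd1, hd2⟩ := Kne hij (by first | omega | (simp only [List.length_cons, List.length_append, List.length_nil] at *; omega)) H
    rcases far_or_adj hij with hfij | haij
    · -- C1
      rw [W_far hfij] at hd1 ⊢
      rw [W_far hfij.symm] at hd2 ⊢
      simp only [List.singleton_append] at hd1 hd2 ⊢
      exact ⟨p::d, (hd1.cons p).trans (R.single (.comm d hfpj)),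
        (hd2.cons p).trans (R.single (.comm d hconf))⟩
    · -- C2
      rw [W_adj haij] at hd1 ⊢
      rw [W_adj haij.symm] at hd2 ⊢
      simp only [List.cons_append, List.nil_append] at hd1 hd2 ⊢
      refine ⟨p::d, ?_, ?_⟩
      · exact ((hd1.cons p).trans (R.single (.comm _ hfpj))).trans
          (R.single (.cons j (.comm _ hconf)))
      · exact ((hd2.cons p).trans (R.single (.comm _ hconf))).trans
          (R.single (.cons i (.comm _ hfpj)))
  · -- far p i, adj p j
    rw [W_adj hapj] at H
    rw [W_adj hapj.symm]
    have hHlen := H.length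
    simp only [List.cons_append, List.nil_append, List.length_cons] at H hHlen ⊢
    obtain ⟨d, hd1, hd2⟩ := Kne hij (by first | omega | (simp only [List.length_cons, List.length_append, List.length_nil] at *; omega)) H
    rcases far_or_adj hij with hfij | haij
    · -- C3
      rw [W_far hfij] at hd1 ⊢
      rw [W_far hfij.symm] at hd2 ⊢
      simp only [List.singleton_append, List.length_cons] at hd1 hd2 ⊢
      have hd2len := hd2.length
      simp only [List.length_cons] at hd2len
      obtain ⟨e, he1, he2⟩ := Kne hpi (by first | omega | (simp only [List.length_cons, List.length_append, List.length_nil] at *; omega)) hd2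
      rw [W_far hconf] at he1
      rw [W_far hconf.symm] at he2
      simp only [List.singleton_append] at he1 he2
      refine ⟨p::j::e, ?_, ?_⟩
      · exact ((hd1.cons p).trans ((he2.cons j).cons p)).trans (R.single (.braid e hapj))
      · exact ((((he1.cons j).cons p).trans
          (R.single (.cons p (.comm e hfij.symm)))).trans (R.single (.comm _ hconf)))
    · -- C4
      rw [W_adj haij] at hd1 ⊢
      rw [W_adj haij.symm] at hd2 ⊢
      simp only [List.cons_append, List.nil_append, List.length_cons] at hd1 hd2 ⊢
      have hd2len := hd2.length
      simp only [List.length_cons] at hd2len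
      obtain ⟨e, he1, he2⟩ := Kne hpi (by first | omega | (simp only [List.length_cons, List.length_append, List.length_nil] at *; omega)) hd2
      have he2len := he2.length
      rw [W_far hconf] at he1
      rw [W_far hconf.symm] at he2
      simp only [List.singleton_append, List.length_cons] at he1 he2 he2len
      obtain ⟨g, hg1, hg2⟩ := Kne (Ne.symm hpj) (by first | omega | (simp only [List.length_cons, List.length_append, List.length_nil] at *; omega)) he2
      rw [W_adj hapj.symm] at hg1
      rw [W_adj hapj] at hg2
      simp only [List.cons_append, List.nil_append] at hg1 hg2
      refine ⟨p::j::i::g, ?_, ?_⟩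
      · -- p::t → ... → j::i::p::j::i::g
        exact (((((hd1.cons p).trans (((hg1.cons i).cons j).cons p)).trans
          (R.single (.cons p (.cons j (.comm _ hconf.symm))))).trans
          (R.single (.braid _ hapj))).trans
          (R.single (.cons j (.cons p (.braid g haij.symm))))).trans
          (R.single (.cons j (.comm _ hconf)))
      · -- p::j::c → ... → i::j::p::j::i::g
        exact ((((((he1.cons j).cons p).trans (((hg2.cons i).cons j).cons p)).trans
          (R.single (.cons p (.braid _ haij.symm)))).trans
          (R.single (.comm _ hconf))).trans
          (R.single (.cons i (.cons p (.cons j (.comm g hconf.symm)))))).trans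
          (R.single (.cons i (.braid _ hapj)))
include K in
lemma crux_aux5 {i j p : Fin (n-1)} {t c : List (Fin (n-1))} (hij : i ≠ j) (hpi : adj p i)
    (hpj : adj p j)
    (hlen : (W p i ++ t).length ≤ L) (H : R (W p i ++ t) (W p j ++ c)) :
    ∃ w, R (W i p ++ t) (W i j ++ w) ∧ R (W j p ++ c) (W j i ++ w) := by
  have Kne : ∀ {a b : Fin (n-1)} {s s' : List (Fin (n-1))}, a ≠ b → s.length < L →
      R (a::s) (b::s') → ∃ w, R s (W a b ++ w) ∧ R s' (W b a ++ w) :=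
    fun hne hl h => (K hl h).2 hne
  have hfij : far i j := far_of_adj_adj hpi hpj hij
  rw [W_adj hpi] at hlen H
  rw [W_adj hpj] at H
  rw [W_adj hpi.symm, W_far hfij]
  rw [W_adj hpj.symm, W_far hfij.symm]
  simp only [List.cons_append, List.nil_append, List.length_cons, List.singleton_append]
    at hlen H ⊢
  have hHlen := H.length
  simp only [List.length_cons] at hHlen
  obtain ⟨d, hd1, hd2⟩ := Kne hij (by first | omega | (simp only [List.length_cons, List.length_append, List.length_nil] at *; omega)) H
  rw [W_far hfij] at hd1
  rw [W_far hfij.symm] at hd2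
  simp only [List.singleton_append] at hd1 hd2
  have hd1len := hd1.length
  simp only [List.length_cons] at hd1len
  obtain ⟨e, he1, he2⟩ := Kne hpj.ne (by first | omega | (simp only [List.length_cons, List.length_append, List.length_nil] at *; omega)) hd1
  rw [W_adj hpj] at he1
  rw [W_adj hpj.symm] at he2
  simp only [List.cons_append, List.nil_append] at he1 he2
  obtain ⟨g, hg1, hg2⟩ := Kne hpi.ne (by first | omega | (simp only [List.length_cons, List.length_append, List.length_nil] at *; omega)) hd2
  rw [W_adj hpi] at hg1
  rw [W_adj hpi.symm] at hg2
  simp only [List.cons_append, List.nil_append] at hg1 hg2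
  have hde : R (p::j::e) (p::i::g) := (he2.symm).trans hg2
  have he2len := he2.length
  simp only [List.length_cons] at he2len
  have hei : R (j::e) (i::g) := (K (u := j::e) (by first | omega | (simp only [List.length_cons, List.length_append, List.length_nil] at *; omega)) hde).1 rfl
  have heilen := hei.length
  simp only [List.length_cons] at heilen
  obtain ⟨m, hm1, hm2⟩ := Kne hij.symm (by first | omega | (simp only [List.length_cons, List.length_append, List.length_nil] at *; omega)) hei
  rw [W_far hfij.symm] at hm1
  rw [W_far hfij] at hm2
  simp only [List.singleton_append] at hm1 hm2
  refine ⟨p::i::j::p::m, ?_, ?_⟩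
  · -- p::i::t → ... → j::p::i::j::p::m
    exact (((((((he1.cons i).cons p).trans
      ((((hm1.cons p).cons j).cons i).cons p)).trans
      (R.single (.cons p (.comm _ hfij)))).trans
      (R.single (.cons p (.cons j (.braid m hpi.symm))))).trans
      (R.single (.braid _ hpj))).trans
      (R.single (.cons j (.cons p (.comm _ hfij.symm)))))
  · -- p::j::c → ... → i::p::i::j::p::m
    exact ((((((hg1.cons j).cons p).trans
      ((((hm2.cons p).cons i).cons j).cons p)).trans
      (R.single (.cons p (.comm _ hfij.symm)))).trans
      (R.single (.cons p (.cons i (.braid m hpj.symm))))).trans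
      (R.single (.braid _ hpi)))

include K in
lemma crux {i j p : Fin (n-1)} {t c : List (Fin (n-1))} (hij : i ≠ j) (hpi : p ≠ i)
    (hpj : p ≠ j)
    (hlen : (W p i ++ t).length ≤ L) (H : R (W p i ++ t) (W p j ++ c)) :
    ∃ w, R (W i p ++ t) (W i j ++ w) ∧ R (W j p ++ c) (W j i ++ w) := by
  rcases far_or_adj hpi with hfpi | hapi
  · exact crux_aux K hij hpi hpj hfpi hlen H
  · rcases far_or_adj hpj with hfpj | hapj
    · have hlen' : (W p j ++ c).length ≤ L := by rw [← H.length]; exact hlen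
      obtain ⟨w, h1, h2⟩ := crux_aux K hij.symm hpj hpi hfpj hlen' H.symm
      exact ⟨w, h2, h1⟩
    · exact crux_aux5 K hij hapi hapj hlen H
lemma W_length {i j : Fin (n-1)} (hij : i ≠ j) : (W i j).length = (W j i).length := by
  rcases far_or_adj hij with h|h
  · rw [W_far h, W_far h.symm]; rfl
  · rw [W_adj h, W_adj h.symm]; rfl

include K in
lemma key_headstep {i p j : Fin (n-1)} {t v : List (Fin (n-1))} (hip : i ≠ p)
    (hC : Concl p (W p i ++ t) j v)
    (hlen : (W i p ++ t).length ≤ L) :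
    Concl i (W i p ++ t) j v := by
  have hlen' : (W p i ++ t).length ≤ L := by
    rwa [List.length_append, W_length (Ne.symm hip), ← List.length_append]
  by_cases hpj : p = j
  · subst hpj
    exact ⟨fun he => absurd he hip, fun hne => ⟨t, R.refl, (hC.1 rfl).symm⟩⟩
  · obtain ⟨c₀, h1, h2⟩ := hC.2 hpj
    by_cases hij : i = j
    · subst hij
      refine ⟨fun _ => ?_, fun hne => absurd rfl hne⟩
      have hcancel : R t c₀ := by
        rcases far_or_adj (Ne.symm hip) with hf | ha
        · rw [W_far hf] at h1 hlen'
          simp only [List.singleton_append, List.length_cons] at h1 hlen'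
          exact (K (by omega) h1).1 rfl
        · rw [W_adj ha] at h1 hlen'
          simp only [List.cons_append, List.nil_append, List.length_cons] at h1 hlen'
          have h1' : R (p::t) (p::c₀) := (K (by simp only [List.length_cons] at *; omega) h1).1 rfl
          exact (K (by simp only [List.length_cons] at *; omega) h1').1 rfl
      exact (R.appendLeft _ hcancel).trans h2.symm
    · obtain ⟨w, A, B⟩ := crux K hij (Ne.symm hip) hpj hlen' h1
      exact ⟨fun he => absurd he hij, fun _ => ⟨w, A, h2.trans B⟩⟩

theorem key : ∀ (L : ℕ) {u v : List (Fin (n-1))} {i j : Fin (n-1)},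
    u.length < L → R (i::u) (j::v) → Concl i u j v := by
  intro L
  induction L with
  | zero => intro u v i j h _; exact absurd h (Nat.not_lt_zero _)
  | succ L IH =>
    have main : ∀ (a : List (Fin (n-1))) {v : List (Fin (n-1))} {j : Fin (n-1)},
        R a (j::v) → ∀ i u, a = i::u → u.length < L+1 → Concl i u j v := by
      intro a v j hR
      induction hR using Relation.ReflTransGen.head_induction_on with
      | refl =>
        intro i u h hlen
        injection h with h1 h2
        subst h1; subst h2
        exact ⟨fun _ => R.refl, fun hne => absurd rfl hne⟩
      | head hstep htail IH2 =>
        intro i u hEq hlen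
        subst hEq
        cases hstep with
        | cons a hs =>
          rename_i u₁
          have hC := IH2 i u₁ rfl (by rw [← hs.length]; exact hlen)
          exact ⟨fun he => (R.single hs).trans (hC.1 he),
                 fun hne => (hC.2 hne).imp fun w hw => ⟨(R.single hs).trans hw.1, hw.2⟩⟩
        | comm t hfar =>
          rename_i p
          have hC := IH2 p (W p i ++ t) (by rw [W_far hfar.symm]; rfl)
            (by rw [W_far hfar.symm]; simpa using hlen)
          have := key_headstep (L := L) (fun hl h => IH hl h) hfar.ne hC
            (by rw [W_far hfar]; simp only [List.singleton_append, List.length_cons] at hlen ⊢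
                omega)
          simpa only [W_far hfar, List.singleton_append] using this
        | braid t hadj =>
          rename_i p
          have hC := IH2 p (W p i ++ t) (by rw [W_adj hadj.symm]; rfl)
            (by rw [W_adj hadj.symm]; simpa using hlen)
          have := key_headstep (L := L) (fun hl h => IH hl h) hadj.ne hC
            (by rw [W_adj hadj]
                simp only [List.cons_append, List.nil_append, List.length_cons] at hlen ⊢
                omega)
          simpa only [W_adj hadj, List.cons_append, List.nil_append] using this
    intro u v i j hlen hR
    exact main _ hR i u rfl hlen

end Crux


/-! ### cancellativity -/

lemma R.cancel_head {a : Fin (n-1)} {s s' : List (Fin (n-1))} (h : R (a::s) (a::s')) : R s s' :=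
  (key (s.length+1) (Nat.lt_succ_self _) h).1 rfl

lemma R.cancel_left (w : List (Fin (n-1))) {s s' : List (Fin (n-1))}
    (h : R (w ++ s) (w ++ s')) : R s s' := by
  induction w with
  | nil => exact h
  | cons a w ih => exact ih (R.cancel_head h)

lemma R.cancel_right (w : List (Fin (n-1))) {s s' : List (Fin (n-1))}
    (h : R (s ++ w) (s' ++ w)) : R s s' := by
  have h2 := h.reverse
  simp only [List.reverse_append] at h2
  have h3 := (R.cancel_left _ h2).reverse
  simpa using h3

/-! ### relation to the presented monoid -/

lemma conGen_to_R {u v : FreeMonoid (Fin (n-1))} (h : conGen (BraidRel n) u v) :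
    R (FreeMonoid.toList u) (FreeMonoid.toList v) := by
  induction h with
  | of a b hab =>
    cases hab with
    | comm i j hc => exact R.single (.comm [] (Or.inl hc))
    | braid i j hb => exact R.single (.braid [] (Or.inl hb))
  | refl a => exact .refl
  | symm _ ih => exact ih.symm
  | trans _ _ ih1 ih2 => exact ih1.trans ih2
  | mul _ _ ih1 ih2 => exact ih1.append ih2

lemma step_to_conGen {l l' : List (Fin (n-1))} (h : Step l l') :
    conGen (BraidRel n) (FreeMonoid.ofList l) (FreeMonoid.ofList l') := by
  induction h with
  | @comm i j t hc =>
    have hrel : conGen (BraidRel n) (FreeMonoid.of i * FreeMonoid.of j)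
        (FreeMonoid.of j * FreeMonoid.of i) := by
      rcases hc with hc | hc
      · exact ConGen.Rel.of _ _ (.comm i j hc)
      · exact ConGen.Rel.symm (ConGen.Rel.of _ _ (.comm j i hc))
    exact ConGen.Rel.mul hrel (ConGen.Rel.refl (FreeMonoid.ofList t))
  | @braid i j t hb =>
    have hrel : conGen (BraidRel n) (FreeMonoid.of i * FreeMonoid.of j * FreeMonoid.of i)
        (FreeMonoid.of j * FreeMonoid.of i * FreeMonoid.of j) := by
      rcases hb with hb | hb
      · exact ConGen.Rel.of _ _ (.braid i j hb)
      · exact ConGen.Rel.symm (ConGen.Rel.of _ _ (.braid j i hb))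
    exact ConGen.Rel.mul hrel (ConGen.Rel.refl (FreeMonoid.ofList t))
  | cons a _ ih => exact ConGen.Rel.mul (ConGen.Rel.refl (FreeMonoid.of a)) ih

lemma R_to_conGen {l l' : List (Fin (n-1))} (h : R l l') :
    conGen (BraidRel n) (FreeMonoid.ofList l) (FreeMonoid.ofList l') := by
  induction h with
  | refl => exact ConGen.Rel.refl _
  | tail _ h2 ih => exact ConGen.Rel.trans ih (step_to_conGen h2)

/-- the class of a word in the braid monoid -/
def wd (l : List (Fin (n-1))) : BraidMonoid n :=
  (conGen (BraidRel n)).mk' (FreeMonoid.ofList l)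

lemma wd_eq_iff {l l' : List (Fin (n-1))} : wd l = wd l' ↔ R l l' := by
  constructor
  · intro h
    exact conGen_to_R ((Con.eq _).1 h)
  · intro h
    exact (Con.eq _).2 (R_to_conGen h)

lemma wd_surjective : Function.Surjective (wd (n := n)) := by
  intro x
  obtain ⟨w, rfl⟩ := Con.mk'_surjective x
  exact ⟨FreeMonoid.toList w, rfl⟩

lemma wd_append (l l' : List (Fin (n-1))) : wd (l ++ l') = wd l * wd l' := by
  unfold wd
  rw [FreeMonoid.ofList_append, map_mul]
  rfl

lemma wd_nil : wd ([] : List (Fin (n-1))) = 1 := rfl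

lemma gen_eq_wd (i : Fin (n-1)) : gen i = wd [i] := rfl

/-- length of a braid -/
def len (x : BraidMonoid n) : ℕ :=
  Con.liftOn x (fun w => (FreeMonoid.toList w).length)
    (fun _ _ h => (conGen_to_R h).length)

lemma len_wd (l : List (Fin (n-1))) : len (wd l) = l.length := rfl

lemma len_mul (x y : BraidMonoid n) : len (x * y) = len x + len y := by
  obtain ⟨lx, rfl⟩ := wd_surjective x
  obtain ⟨ly, rfl⟩ := wd_surjective y
  rw [← wd_append, len_wd, len_wd, len_wd, List.length_append]

lemma len_one : len (1 : BraidMonoid n) = 0 := rfl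

lemma eq_one_of_len_eq_zero {x : BraidMonoid n} (h : len x = 0) : x = 1 := by
  obtain ⟨l, rfl⟩ := wd_surjective x
  rw [len_wd, List.length_eq_zero_iff] at h
  rw [h, wd_nil]

lemma braid_mul_left_cancel {a u v : BraidMonoid n} (h : a * u = a * v) : u = v := by
  obtain ⟨la, rfl⟩ := wd_surjective a
  obtain ⟨lu, rfl⟩ := wd_surjective u
  obtain ⟨lv, rfl⟩ := wd_surjective v
  rw [← wd_append, ← wd_append, wd_eq_iff] at h
  exact wd_eq_iff.2 (R.cancel_left la h)

lemma braid_mul_right_cancel {a u v : BraidMonoid n} (h : u * a = v * a) : u = v := by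
  obtain ⟨la, rfl⟩ := wd_surjective a
  obtain ⟨lu, rfl⟩ := wd_surjective u
  obtain ⟨lv, rfl⟩ := wd_surjective v
  rw [← wd_append, ← wd_append, wd_eq_iff] at h
  exact wd_eq_iff.2 (R.cancel_right la h)

lemma exists_gen_mul_of_ne_one {x : BraidMonoid n} (h : x ≠ 1) :
    ∃ (i : Fin (n-1)) (y : BraidMonoid n), x = gen i * y := by
  obtain ⟨l, rfl⟩ := wd_surjective x
  cases l with
  | nil => exact absurd wd_nil h
  | cons i l => exact ⟨i, wd l, by rw [gen_eq_wd, ← wd_append]; rfl⟩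

lemma exists_mul_gen_of_ne_one {x : BraidMonoid n} (h : x ≠ 1) :
    ∃ (i : Fin (n-1)) (y : BraidMonoid n), x = y * gen i := by
  obtain ⟨l, rfl⟩ := wd_surjective x
  rcases List.eq_nil_or_concat l with rfl | ⟨l', i, rfl⟩
  · exact absurd wd_nil h
  · exact ⟨i, wd l', by rw [gen_eq_wd, ← wd_append, List.concat_eq_append]⟩

lemma gen_ne_one (i : Fin (n-1)) : (gen i : BraidMonoid n) ≠ 1 := by
  intro h
  have := congrArg len h
  rw [gen_eq_wd, len_wd, len_one] at this
  simp at this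

/-! ### divisibility facts -/

lemma ldvd_refl (x : BraidMonoid n) : ldvd x x := ⟨1, (mul_one x).symm⟩

lemma ldvd_mul (x y : BraidMonoid n) : ldvd x (x * y) := ⟨y, rfl⟩

lemma ldvd_trans {x y z : BraidMonoid n} (h1 : ldvd x y) (h2 : ldvd y z) : ldvd x z := by
  obtain ⟨a, rfl⟩ := h1
  obtain ⟨b, rfl⟩ := h2
  exact ⟨a * b, mul_assoc _ _ _⟩

lemma ldvd_of_ldvd_mul_right {x y z : BraidMonoid n} (h : ldvd (x * y) z) : ldvd x z :=
  ldvd_trans (ldvd_mul x y) h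

lemma rdvd_mul (x y : BraidMonoid n) : rdvd x (y * x) := ⟨y, rfl⟩

lemma rdvd_trans {x y z : BraidMonoid n} (h1 : rdvd x y) (h2 : rdvd y z) : rdvd x z := by
  obtain ⟨a, rfl⟩ := h1
  obtain ⟨b, rfl⟩ := h2
  exact ⟨b * a, (mul_assoc _ _ _).symm⟩

lemma ldvd_one_iff {x : BraidMonoid n} : ldvd x 1 ↔ x = 1 := by
  constructor
  · rintro ⟨z, hz⟩
    have := congrArg len hz
    rw [len_one, len_mul] at this
    exact eq_one_of_len_eq_zero (by omega)
  · rintro rfl; exact ldvd_refl 1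

lemma rdvd_one_iff {x : BraidMonoid n} : rdvd x 1 ↔ x = 1 := by
  constructor
  · rintro ⟨z, hz⟩
    have := congrArg len hz
    rw [len_one, len_mul] at this
    exact eq_one_of_len_eq_zero (by omega)
  · rintro rfl; exact ⟨1, (one_mul 1).symm⟩



/-! ### tools for the Möbius inversion -/

/-- left quotient: if `a ≤_l y`, a `z` with `y = a * z`. -/
noncomputable def lquot {n : ℕ} (a y : BraidMonoid n) : BraidMonoid n :=
  if h : ldvd a y then h.choose else 1

lemma lquot_spec {n : ℕ} {a y : BraidMonoid n} (h : ldvd a y) : a * lquot a y = y := by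
  unfold lquot
  rw [dif_pos h]
  exact h.choose_spec.symm

/-- right quotient: if `a ≤_r y`, a `z` with `y = z * a`. -/
noncomputable def rquot {n : ℕ} (a y : BraidMonoid n) : BraidMonoid n :=
  if h : rdvd a y then h.choose else 1

lemma rquot_spec {n : ℕ} {a y : BraidMonoid n} (h : rdvd a y) : rquot a y * a = y := by
  unfold rquot
  rw [dif_pos h]
  exact h.choose_spec.symm

/-- the finset of generators left-dividing `y` -/
noncomputable def Lfin (y : BraidMonoid n) : Finset (Fin (n-1)) :=
  Finset.univ.filter fun i => ldvd (gen i) y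

/-- the finset of generators right-dividing `y` -/
noncomputable def Rfin (y : BraidMonoid n) : Finset (Fin (n-1)) :=
  Finset.univ.filter fun i => rdvd (gen i) y

lemma mem_Lfin {y : BraidMonoid n} {i : Fin (n-1)} : i ∈ Lfin y ↔ ldvd (gen i) y := by
  simp [Lfin]

lemma mem_Rfin {y : BraidMonoid n} {i : Fin (n-1)} : i ∈ Rfin y ↔ rdvd (gen i) y := by
  simp [Rfin]

lemma Lfin_one : Lfin (1 : BraidMonoid n) = ∅ := by
  ext i
  simp only [mem_Lfin, Finset.notMem_empty, iff_false]
  intro hdvd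
  exact gen_ne_one i (ldvd_one_iff.1 hdvd)

lemma Rfin_one : Rfin (1 : BraidMonoid n) = ∅ := by
  ext i
  simp only [mem_Rfin, Finset.notMem_empty, iff_false]
  intro hdvd
  exact gen_ne_one i (rdvd_one_iff.1 hdvd)

lemma Lfin_ne_empty {y : BraidMonoid n} (h : y ≠ 1) : Lfin y ≠ ∅ := by
  obtain ⟨i, y', rfl⟩ := exists_gen_mul_of_ne_one h
  exact Finset.ne_empty_of_mem (mem_Lfin.2 ⟨y', rfl⟩)

lemma Rfin_ne_empty {y : BraidMonoid n} (h : y ≠ 1) : Rfin y ≠ ∅ := by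
  obtain ⟨i, y', rfl⟩ := exists_mul_gen_of_ne_one h
  exact Finset.ne_empty_of_mem (mem_Rfin.2 ⟨y', rfl⟩)

lemma sum_pow_neg_one {α : Type*} [DecidableEq α] (s : Finset α) :
    ∑ X ∈ s.powerset, (-1:ℝ)^X.card = if s = ∅ then 1 else 0 := by
  have h := congrArg (fun z : ℤ => (z : ℝ)) (Finset.sum_powerset_neg_one_pow_card (x := s))
  push_cast at h
  simpa [apply_ite (fun z : ℤ => (z : ℝ))] using h

/-- Möbius inversion on the (finite) set of simple braids. -/
theorem mobius_inversion_simples (n : ℕ) (hn : 2 ≤ n)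
    (Δhat : Finset (Fin (n - 1)) → BraidMonoid n)
    (hlub_l : ∀ X : Finset (Fin (n - 1)),
      (∀ i ∈ X, ldvd (gen i) (Δhat X)) ∧
        ∀ z : BraidMonoid n, (∀ i ∈ X, ldvd (gen i) z) → ldvd (Δhat X) z)
    (hlub_r : ∀ X : Finset (Fin (n - 1)),
      (∀ i ∈ X, rdvd (gen i) (Δhat X)) ∧
        ∀ z : BraidMonoid n, (∀ i ∈ X, rdvd (gen i) z) → rdvd (Δhat X) z)
    (hΔ : Δhat Finset.univ = garside n)
    (f h : BraidMonoid n → ℝ)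
    (hfin : ∀ x : BraidMonoid n, {y : BraidMonoid n | x * y ∈ Simples n}.Finite) :
    (∀ x ∈ Simples n, f x = ∑ y ∈ (hfin x).toFinset, h (x * y)) ↔
      (∀ x ∈ Simples n, h x = ∑ X : Finset (Fin (n - 1)),
          if x * Δhat X ∈ Simples n then (-1 : ℝ) ^ X.card * f (x * Δhat X) else 0) := by
  have memT : ∀ {x' z : BraidMonoid n}, z ∈ (hfin x').toFinset ↔ x' * z ∈ Simples n :=
    fun {x' z} => Set.Finite.mem_toFinset _
  constructor
  · intro hi x hx
    have step1 : ∀ X : Finset (Fin (n-1)),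
        (if x * Δhat X ∈ Simples n then (-1:ℝ)^X.card * f (x*Δhat X) else 0)
        = ∑ z ∈ (hfin (x*Δhat X)).toFinset, (-1:ℝ)^X.card * h (x*Δhat X*z) := by
      intro X
      by_cases hS : x*Δhat X ∈ Simples n
      · rw [if_pos hS, hi _ hS, Finset.mul_sum]
      · rw [if_neg hS, Finset.sum_eq_zero]
        intro z hz
        exact absurd (ldvd_of_ldvd_mul_right (memT.1 hz)) hS
    have main : (∑ X : Finset (Fin (n-1)),
        if x * Δhat X ∈ Simples n then (-1:ℝ)^X.card * f (x*Δhat X) else 0) = h x := by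
      calc (∑ X : Finset (Fin (n-1)),
            if x * Δhat X ∈ Simples n then (-1:ℝ)^X.card * f (x*Δhat X) else 0)
          = ∑ X : Finset (Fin (n-1)), ∑ z ∈ (hfin (x*Δhat X)).toFinset,
              (-1:ℝ)^X.card * h (x*Δhat X*z) := Finset.sum_congr rfl fun X _ => step1 X
        _ = ∑ p ∈ Finset.univ.sigma (fun X => (hfin (x*Δhat X)).toFinset),
              (-1:ℝ)^p.1.card * h (x*Δhat p.1*p.2) :=
            Finset.sum_sigma' _ _ _
        _ = ∑ q ∈ ((hfin x).toFinset.sigma fun y => (Lfin y).powerset),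
              (-1:ℝ)^q.2.card * h (x*q.1) := by
            refine Finset.sum_nbij' (fun p => ⟨Δhat p.1 * p.2, p.1⟩)
              (fun q => ⟨q.2, lquot (Δhat q.2) q.1⟩) ?_ ?_ ?_ ?_ ?_
            · rintro ⟨X, z⟩ hp
              rw [Finset.mem_sigma] at hp ⊢
              obtain ⟨-, hz⟩ := hp
              refine ⟨memT.2 ?_, Finset.mem_powerset.2 fun i hiX => mem_Lfin.2 ?_⟩
              · rw [← mul_assoc]; exact memT.1 hz
              · exact ldvd_trans ((hlub_l X).1 i hiX) (ldvd_mul _ z)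
            · rintro ⟨y, X⟩ hq
              rw [Finset.mem_sigma] at hq ⊢
              obtain ⟨hy, hX⟩ := hq
              have hdvd : ldvd (Δhat X) y :=
                (hlub_l X).2 y fun i hiX => mem_Lfin.1 (Finset.mem_powerset.1 hX hiX)
              refine ⟨Finset.mem_univ _, memT.2 ?_⟩
              rw [mul_assoc, lquot_spec hdvd]
              exact memT.1 hy
            · rintro ⟨X, z⟩ _
              have : lquot (Δhat X) (Δhat X * z) = z :=
                braid_mul_left_cancel (lquot_spec ⟨z, rfl⟩)
              simp only [this]
            · rintro ⟨y, X⟩ hq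
              rw [Finset.mem_sigma] at hq
              have hdvd : ldvd (Δhat X) y :=
                (hlub_l X).2 y fun i hiX => mem_Lfin.1 (Finset.mem_powerset.1 hq.2 hiX)
              simp only [lquot_spec hdvd]
            · rintro ⟨X, z⟩ _
              rw [mul_assoc]
        _ = ∑ y ∈ (hfin x).toFinset, ∑ X ∈ (Lfin y).powerset, (-1:ℝ)^X.card * h (x*y) :=
            Finset.sum_sigma _ _ _
        _ = ∑ y ∈ (hfin x).toFinset, (if Lfin y = ∅ then (1:ℝ) else 0) * h (x*y) := by
            refine Finset.sum_congr rfl fun y _ => ?_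
            rw [← Finset.sum_mul, sum_pow_neg_one]
        _ = h x := by
            rw [Finset.sum_eq_single (1 : BraidMonoid n)]
            · rw [if_pos Lfin_one, one_mul, mul_one]
            · intro y _ hy1
              rw [if_neg (Lfin_ne_empty hy1), zero_mul]
            · intro habs
              exact absurd (memT.2 (by rwa [mul_one])) habs
    exact main.symm
  · intro hii x hx
    have main : (∑ y ∈ (hfin x).toFinset, h (x * y)) = f x := by
      calc (∑ y ∈ (hfin x).toFinset, h (x * y))
          = ∑ y ∈ (hfin x).toFinset,
              ∑ X ∈ Finset.univ.filter (fun X : Finset (Fin (n-1)) =>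
                x*y*Δhat X ∈ Simples n), (-1:ℝ)^X.card * f (x*y*Δhat X) := by
            refine Finset.sum_congr rfl fun y hy => ?_
            rw [hii (x*y) (memT.1 hy)]
            exact (Finset.sum_filter _ _).symm
        _ = ∑ p ∈ ((hfin x).toFinset.sigma fun y => Finset.univ.filter
              (fun X : Finset (Fin (n-1)) => x*y*Δhat X ∈ Simples n)),
              (-1:ℝ)^p.2.card * f (x*p.1*Δhat p.2) :=
            Finset.sum_sigma' _ _ _
        _ = ∑ q ∈ ((hfin x).toFinset.sigma fun w => (Rfin w).powerset),
              (-1:ℝ)^q.2.card * f (x*q.1) := by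
            refine Finset.sum_nbij' (fun p => ⟨p.1 * Δhat p.2, p.2⟩)
              (fun q => ⟨rquot (Δhat q.2) q.1, q.2⟩) ?_ ?_ ?_ ?_ ?_
            · rintro ⟨y, X⟩ hp
              rw [Finset.mem_sigma] at hp ⊢
              obtain ⟨hy, hX⟩ := hp
              rw [Finset.mem_filter] at hX
              refine ⟨memT.2 ?_, Finset.mem_powerset.2 fun i hiX => mem_Rfin.2 ?_⟩
              · rw [← mul_assoc]; exact hX.2
              · exact rdvd_trans ((hlub_r X).1 i hiX) (rdvd_mul _ y)
            · rintro ⟨w, X⟩ hq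
              rw [Finset.mem_sigma] at hq ⊢
              obtain ⟨hw, hX⟩ := hq
              have hdvd : rdvd (Δhat X) w :=
                (hlub_r X).2 w fun i hiX => mem_Rfin.1 (Finset.mem_powerset.1 hX hiX)
              have hspec := rquot_spec hdvd
              constructor
              · refine memT.2 (ldvd_trans ⟨Δhat X, ?_⟩ (memT.1 hw))
                rw [mul_assoc, hspec]
              · rw [Finset.mem_filter]
                refine ⟨Finset.mem_univ _, ?_⟩
                rw [mul_assoc, hspec]
                exact memT.1 hw
            · rintro ⟨y, X⟩ _
              have : rquot (Δhat X) (y * Δhat X) = y :=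
                braid_mul_right_cancel (rquot_spec ⟨y, rfl⟩)
              simp only [this]
            · rintro ⟨w, X⟩ hq
              rw [Finset.mem_sigma] at hq
              have hdvd : rdvd (Δhat X) w :=
                (hlub_r X).2 w fun i hiX => mem_Rfin.1 (Finset.mem_powerset.1 hq.2 hiX)
              simp only [rquot_spec hdvd]
            · rintro ⟨y, X⟩ _
              rw [mul_assoc]
        _ = ∑ w ∈ (hfin x).toFinset, ∑ X ∈ (Rfin w).powerset, (-1:ℝ)^X.card * f (x*w) :=
            Finset.sum_sigma _ _ _
        _ = ∑ w ∈ (hfin x).toFinset, (if Rfin w = ∅ then (1:ℝ) else 0) * f (x*w) := by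
            refine Finset.sum_congr rfl fun w _ => ?_
            rw [← Finset.sum_mul, sum_pow_neg_one]
        _ = f x := by
            rw [Finset.sum_eq_single (1 : BraidMonoid n)]
            · rw [if_pos Rfin_one, one_mul, mul_one]
            · intro w _ hw1
              rw [if_neg (Rfin_ne_empty hw1), zero_mul]
            · intro habs
              exact absurd (memT.2 (by rwa [mul_one])) habs
    exact main.symm


end BraidMeasure
end
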